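/- arXiv:2303.11556 — 6 statements merged into one kernel-verified Lean document; each statement's English description precedes it below -/
import Mathlib

section
/- Let g, a, b, c be real numbers and let D : ℝ² → ℝ be smooth and time-independent. Suppose η : ℝ² × ℝ → ℝ and u : ℝ² × ℝ → ℝ² are smooth and satisfy, at every point of ℝ² × ℝ, the energy-conserving abcd-Boussinesq system with equal regularization parameters b = d: ∂_t η + ∇·[(D+η)u + a∇(D³ ∇·u) − b D² ∇(∂_t η)] = 0 and ∂_t u + ∇[ gη + ½|u|² + c g ∇·(D² ∇η) − b ∇·(D² ∂_t u) ] = 0. Assume moreover that there is a compact set K ⊂ ℝ² such that for every t the functions η(·,t) and u(·,t) are supported in K. Then the energy E(t) = ½ ∫_{ℝ²} [ gη² + (D+η)|u|² − c g D² |∇η|² − a D³ (∇·u)² ] dx is constant in time: E(t) = E(0) for all t ∈ ℝ. -/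
open MeasureTheory

noncomputable section

/-- Partial derivative in the first spatial variable of a function of (x, y, t). -/
def pX (f : ℝ → ℝ → ℝ → ℝ) (x y t : ℝ) : ℝ := deriv (fun s => f s y t) x

/-- Partial derivative in the second spatial variable of a function of (x, y, t). -/
def pY (f : ℝ → ℝ → ℝ → ℝ) (x y t : ℝ) : ℝ := deriv (fun s => f x s t) y

/-- Partial derivative in time of a function of (x, y, t). -/
def pT (f : ℝ → ℝ → ℝ → ℝ) (x y t : ℝ) : ℝ := deriv (fun s => f x y s) t

/-- Spatial divergence ∇·u of the planar field u = (u1, u2). -/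
def divU (u1 u2 : ℝ → ℝ → ℝ → ℝ) : ℝ → ℝ → ℝ → ℝ :=
  fun x y t => pX u1 x y t + pY u2 x y t

/-- First component of R = (D+η)u + a∇(D³∇·u) − b D²∇(∂ₜη). -/
def R1 (a b : ℝ) (D : ℝ → ℝ → ℝ) (η u1 u2 : ℝ → ℝ → ℝ → ℝ) : ℝ → ℝ → ℝ → ℝ :=
  fun x y t => (D x y + η x y t) * u1 x y t
    + a * pX (fun x y t => (D x y)^3 * divU u1 u2 x y t) x y t
    - b * (D x y)^2 * pX (pT η) x y t

/-- Second component of R = (D+η)u + a∇(D³∇·u) − b D²∇(∂ₜη). -/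
def R2 (a b : ℝ) (D : ℝ → ℝ → ℝ) (η u1 u2 : ℝ → ℝ → ℝ → ℝ) : ℝ → ℝ → ℝ → ℝ :=
  fun x y t => (D x y + η x y t) * u2 x y t
    + a * pY (fun x y t => (D x y)^3 * divU u1 u2 x y t) x y t
    - b * (D x y)^2 * pY (pT η) x y t

/-- Q = gη + ½|u|² + c g ∇·(D²∇η) − b ∇·(D²∂ₜu). -/
def Qf (g b c : ℝ) (D : ℝ → ℝ → ℝ) (η u1 u2 : ℝ → ℝ → ℝ → ℝ) : ℝ → ℝ → ℝ → ℝ :=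
  fun x y t => g * η x y t + ((u1 x y t)^2 + (u2 x y t)^2) / 2
    + c * g * (pX (fun x y t => (D x y)^2 * pX η x y t) x y t
             + pY (fun x y t => (D x y)^2 * pY η x y t) x y t)
    - b * (pX (fun x y t => (D x y)^2 * pT u1 x y t) x y t
         + pY (fun x y t => (D x y)^2 * pT u2 x y t) x y t)

/-- The energy functional
E(t) = ½ ∫_{ℝ²} [gη² + (D+η)|u|² − c g D²|∇η|² − a D³(∇·u)²] dx. -/
def energy (g a c : ℝ) (D : ℝ → ℝ → ℝ) (η u1 u2 : ℝ → ℝ → ℝ → ℝ) (t : ℝ) : ℝ :=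
  (1/2) * ∫ p : ℝ × ℝ,
    (g * (η p.1 p.2 t)^2
      + (D p.1 p.2 + η p.1 p.2 t) * ((u1 p.1 p.2 t)^2 + (u2 p.1 p.2 t)^2)
      - c * g * (D p.1 p.2)^2 * ((pX η p.1 p.2 t)^2 + (pY η p.1 p.2 t)^2)
      - a * (D p.1 p.2)^3 * (divU u1 u2 p.1 p.2 t)^2)

namespace AB

def U3 (f : ℝ → ℝ → ℝ → ℝ) : ℝ × ℝ × ℝ → ℝ := fun p => f p.1 p.2.1 p.2.2

def Sm (f : ℝ → ℝ → ℝ → ℝ) : Prop := ContDiff ℝ (⊤ : ℕ∞) (U3 f)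

variable {f g : ℝ → ℝ → ℝ → ℝ} {x y t : ℝ}

lemma lineX_cd (y t : ℝ) : ContDiff ℝ (⊤:ℕ∞) (fun s : ℝ => (s, y, t) : ℝ → ℝ × ℝ × ℝ) :=
  contDiff_id.prodMk (contDiff_const)

lemma lineY_cd (x t : ℝ) : ContDiff ℝ (⊤:ℕ∞) (fun s : ℝ => (x, s, t) : ℝ → ℝ × ℝ × ℝ) :=
  contDiff_const.prodMk (contDiff_id.prodMk contDiff_const)

lemma lineT_cd (x y : ℝ) : ContDiff ℝ (⊤:ℕ∞) (fun s : ℝ => (x, y, s) : ℝ → ℝ × ℝ × ℝ) :=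
  contDiff_const.prodMk (contDiff_const.prodMk contDiff_id)

lemma Sm.dX (hf : Sm f) : DifferentiableAt ℝ (fun s => f s y t) x := by
  have : (fun s => f s y t) = (U3 f) ∘ (fun s : ℝ => (s, y, t)) := rfl
  rw [this]
  exact ((hf.differentiable (by simp)) _).comp x (((lineX_cd y t).differentiable (by simp)) x)

lemma Sm.dY (hf : Sm f) : DifferentiableAt ℝ (fun s => f x s t) y := by
  have : (fun s => f x s t) = (U3 f) ∘ (fun s : ℝ => (x, s, t)) := rfl
  rw [this]
  exact ((hf.differentiable (by simp)) _).comp y (((lineY_cd x t).differentiable (by simp)) y)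

lemma Sm.dT (hf : Sm f) : DifferentiableAt ℝ (fun s => f x y s) t := by
  have : (fun s => f x y s) = (U3 f) ∘ (fun s : ℝ => (x, y, s)) := rfl
  rw [this]
  exact ((hf.differentiable (by simp)) _).comp t (((lineT_cd x y).differentiable (by simp)) t)

lemma Sm.hX (hf : Sm f) (x y t : ℝ) : HasDerivAt (fun s => f s y t) (pX f x y t) x :=
  (hf.dX).hasDerivAt

lemma Sm.hY (hf : Sm f) (x y t : ℝ) : HasDerivAt (fun s => f x s t) (pY f x y t) y :=
  (hf.dY).hasDerivAt

lemma Sm.hT (hf : Sm f) (x y t : ℝ) : HasDerivAt (fun s => f x y s) (pT f x y t) t :=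
  (hf.dT).hasDerivAt

/-- representation of pX as a directional fderiv -/
lemma pX_eq_fderiv (hf : Sm f) (x y t : ℝ) :
    pX f x y t = fderiv ℝ (U3 f) (x, y, t) (1, 0, 0) := by
  have hl : HasDerivAt (fun s : ℝ => ((s, y, t) : ℝ × ℝ × ℝ)) (1, 0, 0) x :=
    (hasDerivAt_id x).prodMk (hasDerivAt_const x ((y, t) : ℝ × ℝ))
  have hF : HasFDerivAt (U3 f) (fderiv ℝ (U3 f) (x, y, t)) (x, y, t) :=
    ((hf.differentiable (by simp)) _).hasFDerivAt
  exact (hF.comp_hasDerivAt x hl).deriv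

lemma pY_eq_fderiv (hf : Sm f) (x y t : ℝ) :
    pY f x y t = fderiv ℝ (U3 f) (x, y, t) (0, 1, 0) := by
  have hl : HasDerivAt (fun s : ℝ => ((x, s, t) : ℝ × ℝ × ℝ)) (0, 1, 0) y :=
    (hasDerivAt_const y x).prodMk ((hasDerivAt_id y).prodMk (hasDerivAt_const y t))
  have hF : HasFDerivAt (U3 f) (fderiv ℝ (U3 f) (x, y, t)) (x, y, t) :=
    ((hf.differentiable (by simp)) _).hasFDerivAt
  exact (hF.comp_hasDerivAt y hl).deriv

lemma pT_eq_fderiv (hf : Sm f) (x y t : ℝ) :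
    pT f x y t = fderiv ℝ (U3 f) (x, y, t) (0, 0, 1) := by
  have hl : HasDerivAt (fun s : ℝ => ((x, y, s) : ℝ × ℝ × ℝ)) (0, 0, 1) t :=
    (hasDerivAt_const t x).prodMk ((hasDerivAt_const t y).prodMk (hasDerivAt_id t))
  have hF : HasFDerivAt (U3 f) (fderiv ℝ (U3 f) (x, y, t)) (x, y, t) :=
    ((hf.differentiable (by simp)) _).hasFDerivAt
  exact (hF.comp_hasDerivAt t hl).deriv

lemma smooth_dapply (hf : Sm f) (v : ℝ × ℝ × ℝ) :
    ContDiff ℝ (⊤:ℕ∞) (fun p => fderiv ℝ (U3 f) p v) :=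
  (hf.fderiv_right ((by exact_mod_cast le_top))).clm_apply contDiff_const

lemma Sm.pX (hf : Sm f) : Sm (_root_.pX f) := by
  have : U3 (_root_.pX f) = fun p => fderiv ℝ (U3 f) p (1, 0, 0) := by
    funext p
    exact pX_eq_fderiv hf p.1 p.2.1 p.2.2
  unfold Sm; rw [this]; exact smooth_dapply hf _

lemma Sm.pY (hf : Sm f) : Sm (_root_.pY f) := by
  have : U3 (_root_.pY f) = fun p => fderiv ℝ (U3 f) p (0, 1, 0) := by
    funext p
    exact pY_eq_fderiv hf p.1 p.2.1 p.2.2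
  unfold Sm; rw [this]; exact smooth_dapply hf _

lemma Sm.pT (hf : Sm f) : Sm (_root_.pT f) := by
  have : U3 (_root_.pT f) = fun p => fderiv ℝ (U3 f) p (0, 0, 1) := by
    funext p
    exact pT_eq_fderiv hf p.1 p.2.1 p.2.2
  unfold Sm; rw [this]; exact smooth_dapply hf _

/-- symmetry of second derivatives for directional derivatives -/
lemma second_symm (hf : Sm f) (v w : ℝ × ℝ × ℝ) (p : ℝ × ℝ × ℝ) :
    fderiv ℝ (fun q => fderiv ℝ (U3 f) q v) p w
      = fderiv ℝ (fun q => fderiv ℝ (U3 f) q w) p v := by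
  have hdf : ∀ q, HasFDerivAt (U3 f) (fderiv ℝ (U3 f) q) q := fun q =>
    ((hf.differentiable (by simp)) q).hasFDerivAt
  have hd2 : DifferentiableAt ℝ (fderiv ℝ (U3 f)) p :=
    ((hf.fderiv_right (m := (⊤:ℕ∞)) (by exact_mod_cast le_top)).differentiable (by simp)) p
  have h2 : HasFDerivAt (fderiv ℝ (U3 f)) (fderiv ℝ (fderiv ℝ (U3 f)) p) p := hd2.hasFDerivAt
  have hsymm := second_derivative_symmetric hdf h2 v w
  have hv : ∀ u : ℝ × ℝ × ℝ,
      fderiv ℝ (fun q => fderiv ℝ (U3 f) q u) p = ((fderiv ℝ (fderiv ℝ (U3 f)) p).flip u) := by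
    intro u
    have : (fun q => fderiv ℝ (U3 f) q u)
        = (fun L : (ℝ × ℝ × ℝ) →L[ℝ] ℝ => L u) ∘ (fderiv ℝ (U3 f)) := rfl
    rw [this]
    have happ : HasFDerivAt (fun L : (ℝ × ℝ × ℝ) →L[ℝ] ℝ => L u)
        (ContinuousLinearMap.apply ℝ ℝ u) (fderiv ℝ (U3 f) p) :=
      (ContinuousLinearMap.apply ℝ ℝ u).hasFDerivAt
    have := (happ.comp p h2).fderiv
    rw [this]
    rfl
  rw [hv w, hv v]
  simp only [ContinuousLinearMap.flip_apply]
  exact hsymm.symm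

lemma clairautXT (hf : Sm f) (x y t : ℝ) : pT (pX f) x y t = pX (pT f) x y t := by
  have h1 : U3 (pX f) = fun p => fderiv ℝ (U3 f) p (1, 0, 0) := by
    funext p; exact pX_eq_fderiv hf p.1 p.2.1 p.2.2
  have h2 : U3 (pT f) = fun p => fderiv ℝ (U3 f) p (0, 0, 1) := by
    funext p; exact pT_eq_fderiv hf p.1 p.2.1 p.2.2
  rw [pT_eq_fderiv hf.pX, pX_eq_fderiv hf.pT, h1, h2]
  exact second_symm hf _ _ _

lemma clairautYT (hf : Sm f) (x y t : ℝ) : pT (pY f) x y t = pY (pT f) x y t := by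
  have h1 : U3 (pY f) = fun p => fderiv ℝ (U3 f) p (0, 1, 0) := by
    funext p; exact pY_eq_fderiv hf p.1 p.2.1 p.2.2
  have h2 : U3 (pT f) = fun p => fderiv ℝ (U3 f) p (0, 0, 1) := by
    funext p; exact pT_eq_fderiv hf p.1 p.2.1 p.2.2
  rw [pT_eq_fderiv hf.pY, pY_eq_fderiv hf.pT, h1, h2]
  exact second_symm hf _ _ _

end AB

namespace AB

variable {f g : ℝ → ℝ → ℝ → ℝ} {x y t : ℝ}

lemma Sm.add (hf : Sm f) (hg : Sm g) : Sm (fun x y t => f x y t + g x y t) :=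
  ContDiff.add hf hg

lemma Sm.sub (hf : Sm f) (hg : Sm g) : Sm (fun x y t => f x y t - g x y t) :=
  ContDiff.sub hf hg

lemma Sm.mul (hf : Sm f) (hg : Sm g) : Sm (fun x y t => f x y t * g x y t) :=
  ContDiff.mul hf hg

lemma Sm.constMul (c : ℝ) (hf : Sm f) : Sm (fun x y t => c * f x y t) :=
  ContDiff.mul contDiff_const hf

lemma Sm.divConst (hf : Sm f) (c : ℝ) : Sm (fun x y t => f x y t / c) :=
  ContDiff.div_const hf c

lemma Sm.spow (hf : Sm f) (n : ℕ) : Sm (fun x y t => f x y t ^ n) :=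
  ContDiff.pow hf n

lemma smD {D : ℝ → ℝ → ℝ} (hD : ContDiff ℝ (⊤ : ℕ∞) fun p : ℝ × ℝ => D p.1 p.2) :
    Sm (fun x y _ => D x y) :=
  hD.comp (contDiff_fst.prodMk (contDiff_fst.comp contDiff_snd))

end AB

namespace AB

def Af (D : ℝ → ℝ → ℝ) (u1 u2 : ℝ → ℝ → ℝ → ℝ) : ℝ → ℝ → ℝ → ℝ :=
  fun x y t => (D x y)^3 * divU u1 u2 x y t

def BxF (D : ℝ → ℝ → ℝ) (η : ℝ → ℝ → ℝ → ℝ) : ℝ → ℝ → ℝ → ℝ :=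
  fun x y t => (D x y)^2 * pX η x y t

def ByF (D : ℝ → ℝ → ℝ) (η : ℝ → ℝ → ℝ → ℝ) : ℝ → ℝ → ℝ → ℝ :=
  fun x y t => (D x y)^2 * pY η x y t

def CxF (D : ℝ → ℝ → ℝ) (u1 : ℝ → ℝ → ℝ → ℝ) : ℝ → ℝ → ℝ → ℝ :=
  fun x y t => (D x y)^2 * pT u1 x y t

def CyF (D : ℝ → ℝ → ℝ) (u2 : ℝ → ℝ → ℝ → ℝ) : ℝ → ℝ → ℝ → ℝ :=
  fun x y t => (D x y)^2 * pT u2 x y t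

def eDen (g a c : ℝ) (D : ℝ → ℝ → ℝ) (η u1 u2 : ℝ → ℝ → ℝ → ℝ) : ℝ → ℝ → ℝ → ℝ :=
  fun x y t => g * (η x y t)^2
      + (D x y + η x y t) * ((u1 x y t)^2 + (u2 x y t)^2)
      - c * g * (D x y)^2 * ((pX η x y t)^2 + (pY η x y t)^2)
      - a * (D x y)^3 * (divU u1 u2 x y t)^2

def G1 (g a b c : ℝ) (D : ℝ → ℝ → ℝ) (η u1 u2 : ℝ → ℝ → ℝ → ℝ) : ℝ → ℝ → ℝ → ℝ :=
  fun x y t => (-2 : ℝ) * (Qf g b c D η u1 u2 x y t * R1 a b D η u1 u2 x y t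
    + a * Af D u1 u2 x y t * pT u1 x y t
    + c * g * pT η x y t * BxF D η x y t
    - b * pT η x y t * CxF D u1 x y t)

def G2 (g a b c : ℝ) (D : ℝ → ℝ → ℝ) (η u1 u2 : ℝ → ℝ → ℝ → ℝ) : ℝ → ℝ → ℝ → ℝ :=
  fun x y t => (-2 : ℝ) * (Qf g b c D η u1 u2 x y t * R2 a b D η u1 u2 x y t
    + a * Af D u1 u2 x y t * pT u2 x y t
    + c * g * pT η x y t * ByF D η x y t
    - b * pT η x y t * CyF D u2 x y t)

section smoothness

variable {g a b c : ℝ} {D : ℝ → ℝ → ℝ} {η u1 u2 : ℝ → ℝ → ℝ → ℝ}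
variable (hD : ContDiff ℝ (⊤ : ℕ∞) fun p : ℝ × ℝ => D p.1 p.2)
variable (hη : Sm η) (hu1 : Sm u1) (hu2 : Sm u2)

include hu1 hu2 in
lemma smW : Sm (divU u1 u2) := Sm.add hu1.pX hu2.pY

include hD hu1 hu2 in
lemma smAf : Sm (Af D u1 u2) := Sm.mul ((smD hD).spow 3) (smW hu1 hu2)

include hD hη in
lemma smBx : Sm (BxF D η) := Sm.mul ((smD hD).spow 2) hη.pX

include hD hη in
lemma smBy : Sm (ByF D η) := Sm.mul ((smD hD).spow 2) hη.pY

include hD hu1 in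
lemma smCx : Sm (CxF D u1) := Sm.mul ((smD hD).spow 2) hu1.pT

include hD hu2 in
lemma smCy : Sm (CyF D u2) := Sm.mul ((smD hD).spow 2) hu2.pT

include hD hη hu1 hu2 in
lemma smQ : Sm (Qf g b c D η u1 u2) := by
  refine Sm.sub (Sm.add (Sm.add (Sm.constMul g hη)
    (Sm.divConst (Sm.add (hu1.spow 2) (hu2.spow 2)) 2))
    (Sm.constMul (c * g) (Sm.add (smBx hD hη).pX (smBy hD hη).pY)))
    (Sm.constMul b (Sm.add (smCx hD hu1).pX (smCy hD hu2).pY))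

include hD hη hu1 hu2 in
lemma smR1 : Sm (R1 a b D η u1 u2) := by
  refine Sm.sub (Sm.add (Sm.mul (Sm.add (smD hD) hη) hu1)
    (Sm.constMul a (smAf hD hu1 hu2).pX))
    (Sm.mul (Sm.constMul b ((smD hD).spow 2)) hη.pT.pX)

include hD hη hu1 hu2 in
lemma smR2 : Sm (R2 a b D η u1 u2) := by
  refine Sm.sub (Sm.add (Sm.mul (Sm.add (smD hD) hη) hu2)
    (Sm.constMul a (smAf hD hu1 hu2).pY))
    (Sm.mul (Sm.constMul b ((smD hD).spow 2)) hη.pT.pY)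

include hD hη hu1 hu2 in
lemma smE : Sm (eDen g a c D η u1 u2) := by
  refine Sm.sub (Sm.sub (Sm.add (Sm.constMul g (hη.spow 2))
    (Sm.mul (Sm.add (smD hD) hη) (Sm.add (hu1.spow 2) (hu2.spow 2))))
    (Sm.mul (Sm.constMul (c * g) ((smD hD).spow 2)) (Sm.add (hη.pX.spow 2) (hη.pY.spow 2))))
    (Sm.mul (Sm.constMul a ((smD hD).spow 3)) ((smW hu1 hu2).spow 2))

include hD hη hu1 hu2 in
lemma smG1 : Sm (G1 g a b c D η u1 u2) := by
  refine Sm.constMul (-2) (Sm.sub (Sm.add (Sm.add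
    (Sm.mul (smQ hD hη hu1 hu2) (smR1 hD hη hu1 hu2))
    (Sm.mul (Sm.constMul a (smAf hD hu1 hu2)) hu1.pT))
    (Sm.mul (Sm.constMul (c * g) hη.pT) (smBx hD hη)))
    (Sm.mul (Sm.constMul b hη.pT) (smCx hD hu1)))

include hD hη hu1 hu2 in
lemma smG2 : Sm (G2 g a b c D η u1 u2) := by
  refine Sm.constMul (-2) (Sm.sub (Sm.add (Sm.add
    (Sm.mul (smQ hD hη hu1 hu2) (smR2 hD hη hu1 hu2))
    (Sm.mul (Sm.constMul a (smAf hD hu1 hu2)) hu2.pT))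
    (Sm.mul (Sm.constMul (c * g) hη.pT) (smBy hD hη)))
    (Sm.mul (Sm.constMul b hη.pT) (smCy hD hu2)))

end smoothness

end AB

namespace AB

theorem key (g a b c : ℝ) (D : ℝ → ℝ → ℝ) (η u1 u2 : ℝ → ℝ → ℝ → ℝ)
    (hD : ContDiff ℝ (⊤ : ℕ∞) fun p : ℝ × ℝ => D p.1 p.2)
    (hη : Sm η) (hu1 : Sm u1) (hu2 : Sm u2)
    (hmass : ∀ x y t : ℝ,
      pT η x y t + pX (R1 a b D η u1 u2) x y t + pY (R2 a b D η u1 u2) x y t = 0)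
    (hmom1 : ∀ x y t : ℝ, pT u1 x y t + pX (Qf g b c D η u1 u2) x y t = 0)
    (hmom2 : ∀ x y t : ℝ, pT u2 x y t + pY (Qf g b c D η u1 u2) x y t = 0)
    (x y t : ℝ) :
    pT (eDen g a c D η u1 u2) x y t
      = pX (G1 g a b c D η u1 u2) x y t + pY (G2 g a b c D η u1 u2) x y t := by
  have hQ := smQ hD hη hu1 hu2 (g := g) (b := b) (c := c)
  have hR1 := smR1 hD hη hu1 hu2 (a := a) (b := b)
  have hR2 := smR2 hD hη hu1 hu2 (a := a) (b := b)
  have hAf := smAf hD hu1 hu2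
  have hBx := smBx hD hη
  have hBy := smBy hD hη
  have hCx := smCx hD hu1
  have hCy := smCy hD hu2
  have hw := smW hu1 hu2
  -- time derivative of the energy density
  have H1 : pT (eDen g a c D η u1 u2) x y t = _ :=
    (((((((hη.hT x y t).pow 2).const_mul g).add
      ((HasDerivAt.const_add (D x y) (hη.hT x y t)).mul
        (((hu1.hT x y t).pow 2).add ((hu2.hT x y t).pow 2)))).sub
      ((((hη.pX.hT x y t).pow 2).add ((hη.pY.hT x y t).pow 2)).const_mul (c * g * (D x y)^2))).sub
      (((hw.hT x y t).pow 2).const_mul (a * (D x y)^3)))).deriv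
  -- x derivative of G1
  have K2a := (hQ.hX x y t).mul (hR1.hX x y t)
  have K2b := (HasDerivAt.const_mul a (hAf.hX x y t)).mul (hu1.pT.hX x y t)
  have K2c := (HasDerivAt.const_mul (c * g) (hη.pT.hX x y t)).mul (hBx.hX x y t)
  have K2d := (HasDerivAt.const_mul b (hη.pT.hX x y t)).mul (hCx.hX x y t)
  have H2 : pX (G1 g a b c D η u1 u2) x y t = _ :=
    (HasDerivAt.const_mul (-2 : ℝ) (((K2a.add K2b).add K2c).sub K2d)).deriv
  have K3a := (hQ.hY x y t).mul (hR2.hY x y t)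
  have K3b := (HasDerivAt.const_mul a (hAf.hY x y t)).mul (hu2.pT.hY x y t)
  have K3c := (HasDerivAt.const_mul (c * g) (hη.pT.hY x y t)).mul (hBy.hY x y t)
  have K3d := (HasDerivAt.const_mul b (hη.pT.hY x y t)).mul (hCy.hY x y t)
  have H3 : pY (G2 g a b c D η u1 u2) x y t = _ :=
    (HasDerivAt.const_mul (-2 : ℝ) (((K3a.add K3b).add K3c).sub K3d)).deriv
  -- time derivative of the divergence
  have hwT : pT (divU u1 u2) x y t = pT (pX u1) x y t + pT (pY u2) x y t := by
    have h : HasDerivAt (fun s => divU u1 u2 x y s)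
        (pT (pX u1) x y t + pT (pY u2) x y t) t :=
      (hu1.pX.hT x y t).add (hu2.pY.hT x y t)
    exact h.deriv
  have c1 : pT (pX η) x y t = pX (pT η) x y t := clairautXT hη x y t
  have c2 : pT (pY η) x y t = pY (pT η) x y t := clairautYT hη x y t
  have c3 : pT (pX u1) x y t = pX (pT u1) x y t := clairautXT hu1 x y t
  have c4 : pT (pY u2) x y t = pY (pT u2) x y t := clairautYT hu2 x y t
  have m1 : pT u1 x y t = -pX (Qf g b c D η u1 u2) x y t := by linarith [hmom1 x y t]
  have m2 : pT u2 x y t = -pY (Qf g b c D η u1 u2) x y t := by linarith [hmom2 x y t]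
  have mass' : pX (R1 a b D η u1 u2) x y t
      = -pT η x y t - pY (R2 a b D η u1 u2) x y t := by linarith [hmass x y t]
  norm_num at H1
  have eAf1 : pX (Af D u1 u2) x y t
      = pX (fun x y t => (D x y)^3 * (pX u1 x y t + pY u2 x y t)) x y t := rfl
  have eAf2 : pY (Af D u1 u2) x y t
      = pY (fun x y t => (D x y)^3 * (pX u1 x y t + pY u2 x y t)) x y t := rfl
  have eBx : pX (BxF D η) x y t
      = pX (fun x y t => (D x y)^2 * pX η x y t) x y t := rfl
  have eBy : pY (ByF D η) x y t
      = pY (fun x y t => (D x y)^2 * pY η x y t) x y t := rfl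
  have eCx : pX (CxF D u1) x y t
      = pX (fun x y t => (D x y)^2 * pT u1 x y t) x y t := rfl
  have eCy : pY (CyF D u2) x y t
      = pY (fun x y t => (D x y)^2 * pT u2 x y t) x y t := rfl
  rw [H1, H2, H3, hwT, c1, c2, c3, c4]
  simp only [Qf, R1, R2, Af, BxF, ByF, CxF, CyF, divU] at m1 m2 mass' ⊢
  rw [m1, m2, mass', eAf1, eAf2, eBx, eBy, eCx, eCy]
  ring

end AB

namespace AB

variable {f : ℝ → ℝ → ℝ → ℝ} {K : Set (ℝ × ℝ)}

def Van (K : Set (ℝ × ℝ)) (f : ℝ → ℝ → ℝ → ℝ) : Prop :=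
  ∀ x y t : ℝ, (x, y) ∉ K → f x y t = 0

lemma Van.vpX (hK : IsClosed K) (hv : Van K f) : Van K (pX f) := by
  intro x y t h
  have hx : ∀ᶠ s in nhds x, f s y t = 0 := by
    have hc : ContinuousAt (fun s : ℝ => ((s, y) : ℝ × ℝ)) x := by fun_prop
    have hmem : Kᶜ ∈ nhds ((x, y) : ℝ × ℝ) := hK.isOpen_compl.mem_nhds h
    filter_upwards [hc.preimage_mem_nhds hmem] with s hs using hv s y t hs
  have heq : (fun s => f s y t) =ᶠ[nhds x] (fun _ => (0 : ℝ)) := hx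
  show deriv (fun s => f s y t) x = 0
  rw [heq.deriv_eq, deriv_const]

lemma Van.vpY (hK : IsClosed K) (hv : Van K f) : Van K (pY f) := by
  intro x y t h
  have hx : ∀ᶠ s in nhds y, f x s t = 0 := by
    have hc : ContinuousAt (fun s : ℝ => ((x, s) : ℝ × ℝ)) y := by fun_prop
    have hmem : Kᶜ ∈ nhds ((x, y) : ℝ × ℝ) := hK.isOpen_compl.mem_nhds h
    filter_upwards [hc.preimage_mem_nhds hmem] with s hs using hv x s t hs
  have heq : (fun s => f x s t) =ᶠ[nhds y] (fun _ => (0 : ℝ)) := hx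
  show deriv (fun s => f x s t) y = 0
  rw [heq.deriv_eq, deriv_const]

lemma Van.vpT (hv : Van K f) : Van K (pT f) := by
  intro x y t h
  show deriv (fun s => f x y s) t = 0
  have : (fun s => f x y s) = (fun _ => (0 : ℝ)) := funext fun s => hv x y s h
  rw [this, deriv_const]

lemma Sm.contP (hf : Sm f) (t : ℝ) : Continuous (fun p : ℝ × ℝ => f p.1 p.2 t) := by
  have h : (fun p : ℝ × ℝ => f p.1 p.2 t) = (U3 f) ∘ (fun p : ℝ × ℝ => (p.1, p.2, t)) := rfl
  rw [h]
  exact hf.continuous.comp (by fun_prop)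

lemma Sm.cdX (hf : Sm f) (y t : ℝ) : ContDiff ℝ 1 (fun x => f x y t) :=
  (hf.comp (lineX_cd y t)).of_le (by exact_mod_cast le_top)

lemma Sm.cdY (hf : Sm f) (x t : ℝ) : ContDiff ℝ 1 (fun y => f x y t) :=
  (hf.comp (lineY_cd x t)).of_le (by exact_mod_cast le_top)

lemma hcsP (hK : IsCompact K) (hv : Van K f) (t : ℝ) :
    HasCompactSupport (fun p : ℝ × ℝ => f p.1 p.2 t) :=
  HasCompactSupport.intro hK fun p hp => hv p.1 p.2 t (by rwa [Prod.mk.eta])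

lemma integrable_slice (hf : Sm f) (hK : IsCompact K) (hv : Van K f) (t : ℝ) :
    Integrable (fun p : ℝ × ℝ => f p.1 p.2 t) :=
  (hf.contP t).integrable_of_hasCompactSupport (hcsP hK hv t)

lemma hcsX (hK : IsCompact K) (hv : Van K f) (y t : ℝ) :
    HasCompactSupport (fun x => f x y t) :=
  HasCompactSupport.intro (hK.image continuous_fst) fun x hx =>
    hv x y t (fun hmem => hx ⟨(x, y), hmem, rfl⟩)

lemma hcsY (hK : IsCompact K) (hv : Van K f) (x t : ℝ) :
    HasCompactSupport (fun y => f x y t) :=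
  HasCompactSupport.intro (hK.image continuous_snd) fun y hy =>
    hv x y t (fun hmem => hy ⟨(x, y), hmem, rfl⟩)

lemma integral_deriv_zero (f : ℝ → ℝ) (hf : ContDiff ℝ 1 f) (hs : HasCompactSupport f) :
    ∫ x : ℝ, deriv f x = 0 := by
  have h1 := hs.integral_Iic_deriv_eq hf 0
  have h2 := hs.integral_Ioi_deriv_eq hf 0
  have hint : Integrable (deriv f) :=
    (hf.continuous_deriv le_rfl).integrable_of_hasCompactSupport hs.deriv
  rw [← intervalIntegral.integral_Iic_add_Ioi (b := (0:ℝ)) hint.integrableOn hint.integrableOn, h1, h2]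
  ring

lemma integral_pX_zero (hf : Sm f) (hK : IsCompact K) (hv : Van K f) (t : ℝ) :
    ∫ p : ℝ × ℝ, pX f p.1 p.2 t = 0 := by
  have hint : Integrable (fun p : ℝ × ℝ => pX f p.1 p.2 t) :=
    integrable_slice hf.pX hK (hv.vpX hK.isClosed) t
  rw [Measure.volume_eq_prod] at hint ⊢
  rw [integral_prod _ hint]
  have hswap : Integrable (Function.uncurry fun x y => pX f x y t)
      ((volume : Measure ℝ).prod volume) := hint
  rw [integral_integral_swap hswap]
  have hinner : ∀ y : ℝ, (∫ x : ℝ, pX f x y t) = 0 := by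
    intro y
    exact integral_deriv_zero _ (hf.cdX y t) (hcsX hK hv y t)
  simp only [hinner, integral_zero]

lemma integral_pY_zero (hf : Sm f) (hK : IsCompact K) (hv : Van K f) (t : ℝ) :
    ∫ p : ℝ × ℝ, pY f p.1 p.2 t = 0 := by
  have hint : Integrable (fun p : ℝ × ℝ => pY f p.1 p.2 t) :=
    integrable_slice hf.pY hK (hv.vpY hK.isClosed) t
  rw [Measure.volume_eq_prod] at hint ⊢
  rw [integral_prod _ hint]
  have hinner : ∀ x : ℝ, (∫ y : ℝ, pY f x y t) = 0 := by
    intro x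
    exact integral_deriv_zero _ (hf.cdY x t) (hcsY hK hv x t)
  simp only [hinner, integral_zero]

end AB

open AB

/-- smooth, compactly supported solutions of the energy-conserving
abcd-Boussinesq system (with equal regularization parameters b = d) over a
smooth time-independent bottom D conserve the energy E(t) = E(0) for all t. -/
theorem abcd_energy_conservation
    (g a b c : ℝ) (D : ℝ → ℝ → ℝ) (η u1 u2 : ℝ → ℝ → ℝ → ℝ)
    (hD : ContDiff ℝ (⊤ : ℕ∞) fun p : ℝ × ℝ => D p.1 p.2)
    (hη : ContDiff ℝ (⊤ : ℕ∞) fun p : ℝ × ℝ × ℝ => η p.1 p.2.1 p.2.2)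
    (hu1 : ContDiff ℝ (⊤ : ℕ∞) fun p : ℝ × ℝ × ℝ => u1 p.1 p.2.1 p.2.2)
    (hu2 : ContDiff ℝ (⊤ : ℕ∞) fun p : ℝ × ℝ × ℝ => u2 p.1 p.2.1 p.2.2)
    (hmass : ∀ x y t : ℝ,
      pT η x y t + pX (R1 a b D η u1 u2) x y t + pY (R2 a b D η u1 u2) x y t = 0)
    (hmom1 : ∀ x y t : ℝ, pT u1 x y t + pX (Qf g b c D η u1 u2) x y t = 0)
    (hmom2 : ∀ x y t : ℝ, pT u2 x y t + pY (Qf g b c D η u1 u2) x y t = 0)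
    (K : Set (ℝ × ℝ)) (hK : IsCompact K)
    (hsupp : ∀ t x y : ℝ, (x, y) ∉ K →
      η x y t = 0 ∧ u1 x y t = 0 ∧ u2 x y t = 0) :
    ∀ t : ℝ, energy g a c D η u1 u2 t = energy g a c D η u1 u2 0 := by

  have hη' : Sm η := hη
  have hu1' : Sm u1 := hu1
  have hu2' : Sm u2 := hu2
  have hKc : IsClosed K := hK.isClosed
  -- vanishing facts
  have vη : Van K η := fun x y t h => (hsupp t x y h).1
  have vu1 : Van K u1 := fun x y t h => (hsupp t x y h).2.1
  have vu2 : Van K u2 := fun x y t h => (hsupp t x y h).2.2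
  have vw : Van K (divU u1 u2) := by
    intro x y t h
    show pX u1 x y t + pY u2 x y t = 0
    rw [vu1.vpX hKc x y t h, vu2.vpY hKc x y t h, add_zero]
  have vAf : Van K (fun x y t => (D x y)^3 * divU u1 u2 x y t) := by
    intro x y t h
    show (D x y)^3 * divU u1 u2 x y t = 0
    rw [vw x y t h, mul_zero]
  have vBx : Van K (fun x y t => (D x y)^2 * pX η x y t) := by
    intro x y t h
    show (D x y)^2 * pX η x y t = 0
    rw [vη.vpX hKc x y t h, mul_zero]
  have vBy : Van K (fun x y t => (D x y)^2 * pY η x y t) := by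
    intro x y t h
    show (D x y)^2 * pY η x y t = 0
    rw [vη.vpY hKc x y t h, mul_zero]
  have vCx : Van K (fun x y t => (D x y)^2 * pT u1 x y t) := by
    intro x y t h
    show (D x y)^2 * pT u1 x y t = 0
    rw [vu1.vpT x y t h, mul_zero]
  have vCy : Van K (fun x y t => (D x y)^2 * pT u2 x y t) := by
    intro x y t h
    show (D x y)^2 * pT u2 x y t = 0
    rw [vu2.vpT x y t h, mul_zero]
  have vQ : Van K (Qf g b c D η u1 u2) := by
    intro x y t h
    simp only [Qf]
    rw [vη x y t h, vu1 x y t h, vu2 x y t h, vBx.vpX hKc x y t h, vBy.vpY hKc x y t h,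
      vCx.vpX hKc x y t h, vCy.vpY hKc x y t h]
    ring
  have vR1 : Van K (R1 a b D η u1 u2) := by
    intro x y t h
    simp only [R1]
    rw [vu1 x y t h, vAf.vpX hKc x y t h, (vη.vpT).vpX hKc x y t h]
    ring
  have vR2 : Van K (R2 a b D η u1 u2) := by
    intro x y t h
    simp only [R2]
    rw [vu2 x y t h, vAf.vpY hKc x y t h, (vη.vpT).vpY hKc x y t h]
    ring
  have veDen : Van K (eDen g a c D η u1 u2) := by
    intro x y t h
    simp only [eDen]
    rw [vη x y t h, vu1 x y t h, vu2 x y t h, vη.vpX hKc x y t h, vη.vpY hKc x y t h,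
      vw x y t h]
    ring
  have vG1 : Van K (G1 g a b c D η u1 u2) := by
    intro x y t h
    simp only [G1]
    rw [vQ x y t h, vu1.vpT x y t h, vη.vpT x y t h]
    ring
  have vG2 : Van K (G2 g a b c D η u1 u2) := by
    intro x y t h
    simp only [G2]
    rw [vQ x y t h, vu2.vpT x y t h, vη.vpT x y t h]
    ring
  have vdE : Van K (pT (eDen g a c D η u1 u2)) := veDen.vpT
  have hsmE := smE hD hη' hu1' hu2' (g := g) (a := a) (c := c)
  have hsmG1 := smG1 hD hη' hu1' hu2' (g := g) (a := a) (b := b) (c := c)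
  have hsmG2 := smG2 hD hη' hu1' hu2' (g := g) (a := a) (b := b) (c := c)
  -- the spatial integral of pT eDen vanishes
  have hzero : ∀ t₀ : ℝ, (∫ p : ℝ × ℝ, pT (eDen g a c D η u1 u2) p.1 p.2 t₀) = 0 := by
    intro t₀
    have hcongr : ∀ p : ℝ × ℝ, pT (eDen g a c D η u1 u2) p.1 p.2 t₀
        = pX (G1 g a b c D η u1 u2) p.1 p.2 t₀ + pY (G2 g a b c D η u1 u2) p.1 p.2 t₀ :=
      fun p => key g a b c D η u1 u2 hD hη' hu1' hu2' hmass hmom1 hmom2 p.1 p.2 t₀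
    simp only [hcongr]
    rw [integral_add (integrable_slice hsmG1.pX hK (vG1.vpX hKc) t₀)
        (integrable_slice hsmG2.pY hK (vG2.vpY hKc) t₀),
      integral_pX_zero hsmG1 hK vG1 t₀, integral_pY_zero hsmG2 hK vG2 t₀, add_zero]
  -- derivative of the integral is zero
  have hE : ∀ t₀ : ℝ, HasDerivAt
      (fun τ => ∫ p : ℝ × ℝ, eDen g a c D η u1 u2 p.1 p.2 τ) 0 t₀ := by
    intro t₀
    have hcont : Continuous (fun q : (ℝ × ℝ) × ℝ =>
        pT (eDen g a c D η u1 u2) q.1.1 q.1.2 q.2) := by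
      have h : (fun q : (ℝ × ℝ) × ℝ => pT (eDen g a c D η u1 u2) q.1.1 q.1.2 q.2)
          = U3 (pT (eDen g a c D η u1 u2)) ∘ (fun q : (ℝ × ℝ) × ℝ => (q.1.1, q.1.2, q.2)) := rfl
      rw [h]
      exact hsmE.pT.continuous.comp (by fun_prop)
    obtain ⟨C, hC⟩ := (hK.prod (isCompact_Icc (a := t₀ - 1) (b := t₀ + 1))).exists_bound_of_continuousOn
      hcont.continuousOn
    have hmain := hasDerivAt_integral_of_dominated_loc_of_deriv_le (μ := (volume : Measure (ℝ × ℝ)))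
      (F := fun τ (p : ℝ × ℝ) => eDen g a c D η u1 u2 p.1 p.2 τ)
      (F' := fun τ (p : ℝ × ℝ) => pT (eDen g a c D η u1 u2) p.1 p.2 τ)
      (x₀ := t₀) (bound := K.indicator fun _ => C) (s := Metric.ball t₀ 1) (Metric.ball_mem_nhds t₀ one_pos)
      (Filter.Eventually.of_forall fun τ => ((hsmE.contP τ).aestronglyMeasurable))
      (integrable_slice hsmE hK veDen t₀)
      ((hsmE.pT.contP t₀).aestronglyMeasurable)
      (Filter.Eventually.of_forall ?_)
      ?_
      (Filter.Eventually.of_forall fun p τ _ => hsmE.hT p.1 p.2 τ)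
    · have h0 : (∫ p : ℝ × ℝ, pT (eDen g a c D η u1 u2) p.1 p.2 t₀) = 0 := hzero t₀
      rw [h0] at hmain
      exact hmain.2
    · intro p τ hτ
      by_cases hp : p ∈ K
      · rw [Set.indicator_of_mem hp]
        refine hC ((p.1, p.2), τ) ⟨by rwa [Prod.mk.eta], ?_⟩
        rw [Metric.mem_ball, Real.dist_eq] at hτ
        constructor <;> [linarith [abs_lt.mp hτ]; linarith [abs_lt.mp hτ]]
      · rw [Set.indicator_of_notMem hp]
        have h0 : pT (eDen g a c D η u1 u2) p.1 p.2 τ = 0 :=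
          vdE p.1 p.2 τ (by rwa [Prod.mk.eta])
        show ‖pT (eDen g a c D η u1 u2) p.1 p.2 τ‖ ≤ 0
        rw [h0]
        simp
    · exact (integrableOn_const hK.measure_lt_top.ne).integrable_indicator
        hKc.measurableSet
  -- conclude
  intro t
  have hdiff : Differentiable ℝ (fun τ => ∫ p : ℝ × ℝ, eDen g a c D η u1 u2 p.1 p.2 τ) :=
    fun τ => (hE τ).differentiableAt
  have hder : ∀ τ, deriv (fun τ => ∫ p : ℝ × ℝ, eDen g a c D η u1 u2 p.1 p.2 τ) τ = 0 :=
    fun τ => (hE τ).deriv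
  have hconst := is_const_of_deriv_eq_zero hdiff hder t 0
  have h1 : energy g a c D η u1 u2 t
      = (1/2) * ∫ p : ℝ × ℝ, eDen g a c D η u1 u2 p.1 p.2 t := rfl
  have h2 : energy g a c D η u1 u2 0
      = (1/2) * ∫ p : ℝ × ℝ, eDen g a c D η u1 u2 p.1 p.2 0 := rfl
  rw [h1, h2, hconst]
end
end

section
/- Let g, a, b, c be real numbers and let D : ℝ² → ℝ be smooth and time-independent. Suppose η : ℝ² × ℝ → ℝ and u : ℝ² × ℝ → ℝ² are smooth and satisfy, at every point of ℝ² × ℝ, the system ∂_t η + ∇·R = 0 and ∂_t u + ∇Q = 0, where Q = gη + ½|u|² + c g ∇·(D² ∇η) − b ∇·(D² ∂_t u) and R = (D+η)u + a∇(D³ ∇·u) − b D² ∇(∂_t η). Define the energy density e = gη² + (D+η)|u|² − c g D² |∇η|² − a D³ (∇·u)² and the flux F = Q·R + c g (∂_t η) D² ∇η + a (D³ ∇·u) ∂_t u − b (∂_t η) D² ∂_t u. Then the pointwise local conservation law ∂_t(½ e) + ∇·F = 0 holds at every point of ℝ² × ℝ. -/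
noncomputable section

/-- Energy density e = gη² + (D+η)|u|² − c g D²|∇η|² − a D³(∇·u)². -/
def eDen (g a c : ℝ) (D : ℝ → ℝ → ℝ) (η u1 u2 : ℝ → ℝ → ℝ → ℝ) : ℝ → ℝ → ℝ → ℝ :=
  fun x y t => g * (η x y t)^2
    + (D x y + η x y t) * ((u1 x y t)^2 + (u2 x y t)^2)
    - c * g * (D x y)^2 * ((pX η x y t)^2 + (pY η x y t)^2)
    - a * (D x y)^3 * (divU u1 u2 x y t)^2

/-- First component of the flux
F = Q R + c g (∂ₜη) D² ∇η + a (D³∇·u) ∂ₜu − b (∂ₜη) D² ∂ₜu. -/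
def F1 (g a b c : ℝ) (D : ℝ → ℝ → ℝ) (η u1 u2 : ℝ → ℝ → ℝ → ℝ) : ℝ → ℝ → ℝ → ℝ :=
  fun x y t => Qf g b c D η u1 u2 x y t * R1 a b D η u1 u2 x y t
    + c * g * pT η x y t * (D x y)^2 * pX η x y t
    + a * ((D x y)^3 * divU u1 u2 x y t) * pT u1 x y t
    - b * pT η x y t * (D x y)^2 * pT u1 x y t

/-- Second component of the flux
F = Q R + c g (∂ₜη) D² ∇η + a (D³∇·u) ∂ₜu − b (∂ₜη) D² ∂ₜu. -/
def F2 (g a b c : ℝ) (D : ℝ → ℝ → ℝ) (η u1 u2 : ℝ → ℝ → ℝ → ℝ) : ℝ → ℝ → ℝ → ℝ :=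
  fun x y t => Qf g b c D η u1 u2 x y t * R2 a b D η u1 u2 x y t
    + c * g * pT η x y t * (D x y)^2 * pY η x y t
    + a * ((D x y)^3 * divU u1 u2 x y t) * pT u2 x y t
    - b * pT η x y t * (D x y)^2 * pT u2 x y t

namespace Aux

def unc (f : ℝ → ℝ → ℝ → ℝ) : ℝ × ℝ × ℝ → ℝ := fun p => f p.1 p.2.1 p.2.2

def Sm (f : ℝ → ℝ → ℝ → ℝ) : Prop := ContDiff ℝ (⊤ : ℕ∞) (unc f)

variable {f g : ℝ → ℝ → ℝ → ℝ} {x y t : ℝ}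

def e1 : ℝ × ℝ × ℝ := (1, 0, 0)
def e2 : ℝ × ℝ × ℝ := (0, 1, 0)
def e3 : ℝ × ℝ × ℝ := (0, 0, 1)

theorem hasDX' (hf : Sm f) (x y t : ℝ) :
    HasDerivAt (fun s => f s y t) (fderiv ℝ (unc f) (x, y, t) e1) x := by
  have h1 : HasDerivAt (fun s : ℝ => (s, y, t)) e1 x :=
    (hasDerivAt_id x).prodMk (hasDerivAt_const x (y, t))
  exact ((hf.differentiable (by simp) (x,y,t)).hasFDerivAt).comp_hasDerivAt x h1

theorem hasDY' (hf : Sm f) (x y t : ℝ) :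
    HasDerivAt (fun s => f x s t) (fderiv ℝ (unc f) (x, y, t) e2) y := by
  have h1 : HasDerivAt (fun s : ℝ => (x, s, t)) e2 y :=
    (hasDerivAt_const y x).prodMk ((hasDerivAt_id y).prodMk (hasDerivAt_const y t))
  exact ((hf.differentiable (by simp) (x,y,t)).hasFDerivAt).comp_hasDerivAt y h1

theorem hasDT' (hf : Sm f) (x y t : ℝ) :
    HasDerivAt (fun s => f x y s) (fderiv ℝ (unc f) (x, y, t) e3) t := by
  have h1 : HasDerivAt (fun s : ℝ => (x, y, s)) e3 t :=
    (hasDerivAt_const t x).prodMk ((hasDerivAt_const t y).prodMk (hasDerivAt_id t))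
  exact ((hf.differentiable (by simp) (x,y,t)).hasFDerivAt).comp_hasDerivAt t h1

theorem pX_eq (hf : Sm f) : pX f x y t = fderiv ℝ (unc f) (x, y, t) e1 := (hasDX' hf x y t).deriv
theorem pY_eq (hf : Sm f) : pY f x y t = fderiv ℝ (unc f) (x, y, t) e2 := (hasDY' hf x y t).deriv
theorem pT_eq (hf : Sm f) : pT f x y t = fderiv ℝ (unc f) (x, y, t) e3 := (hasDT' hf x y t).deriv

theorem hasDX (hf : Sm f) (x y t : ℝ) :
    HasDerivAt (fun s => f s y t) (pX f x y t) x := by rw [pX_eq hf]; exact hasDX' hf x y t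
theorem hasDY (hf : Sm f) (x y t : ℝ) :
    HasDerivAt (fun s => f x s t) (pY f x y t) y := by rw [pY_eq hf]; exact hasDY' hf x y t
theorem hasDT (hf : Sm f) (x y t : ℝ) :
    HasDerivAt (fun s => f x y s) (pT f x y t) t := by rw [pT_eq hf]; exact hasDT' hf x y t

theorem fderiv_smooth (hf : Sm f) : ContDiff ℝ (⊤ : ℕ∞) (fderiv ℝ (unc f)) :=
  hf.fderiv_right (by simp)

theorem SmX (hf : Sm f) : Sm (pX f) := by
  have : unc (pX f) = fun p => fderiv ℝ (unc f) p e1 := by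
    funext p
    exact pX_eq hf (x := p.1) (y := p.2.1) (t := p.2.2)
  rw [Sm, this]
  exact (fderiv_smooth hf).clm_apply contDiff_const

theorem SmY (hf : Sm f) : Sm (pY f) := by
  have : unc (pY f) = fun p => fderiv ℝ (unc f) p e2 := by
    funext p; exact pY_eq hf
  rw [Sm, this]
  exact (fderiv_smooth hf).clm_apply contDiff_const

theorem SmT (hf : Sm f) : Sm (pT f) := by
  have : unc (pT f) = fun p => fderiv ℝ (unc f) p e3 := by
    funext p; exact pT_eq hf
  rw [Sm, this]
  exact (fderiv_smooth hf).clm_apply contDiff_const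

theorem Sm.add (hf : Sm f) (hg : Sm g) : Sm (fun x y t => f x y t + g x y t) :=
  ContDiff.add hf hg

theorem Sm.sub (hf : Sm f) (hg : Sm g) : Sm (fun x y t => f x y t - g x y t) :=
  ContDiff.sub hf hg

theorem Sm.mul (hf : Sm f) (hg : Sm g) : Sm (fun x y t => f x y t * g x y t) :=
  ContDiff.mul hf hg

theorem Sm.const : Sm (fun _ _ _ => (c : ℝ)) := contDiff_const

end Aux

namespace Aux
variable {f : ℝ → ℝ → ℝ → ℝ} {x y t : ℝ}

theorem symm2 (hf : Sm f) (q v w : ℝ × ℝ × ℝ) :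
    fderiv ℝ (fun p => fderiv ℝ (unc f) p v) q w
      = fderiv ℝ (fun p => fderiv ℝ (unc f) p w) q v := by
  have hdiff : ∀ y, HasFDerivAt (unc f) (fderiv ℝ (unc f) y) y := fun y =>
    (hf.differentiable (by simp) y).hasFDerivAt
  have h2 : HasFDerivAt (fderiv ℝ (unc f)) (fderiv ℝ (fderiv ℝ (unc f)) q) q :=
    ((fderiv_smooth hf).differentiable (by simp) q).hasFDerivAt
  have hsymm := second_derivative_symmetric hdiff h2 v w
  have key : ∀ u : ℝ × ℝ × ℝ, fderiv ℝ (fun p => fderiv ℝ (unc f) p u) q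
      = (ContinuousLinearMap.apply ℝ ℝ u).comp (fderiv ℝ (fderiv ℝ (unc f)) q) :=
    fun u => (((ContinuousLinearMap.apply ℝ ℝ u).hasFDerivAt).comp q h2).fderiv
  rw [key v, key w]
  simp only [ContinuousLinearMap.coe_comp', Function.comp_apply,
    ContinuousLinearMap.apply_apply]
  exact hsymm.symm

theorem pTpX (hf : Sm f) : pT (pX f) x y t = pX (pT f) x y t := by
  rw [pT_eq (SmX hf), pX_eq (SmT hf)]
  have hx : unc (pX f) = fun p => fderiv ℝ (unc f) p e1 := funext fun p => pX_eq hf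
  have ht : unc (pT f) = fun p => fderiv ℝ (unc f) p e3 := funext fun p => pT_eq hf
  rw [hx, ht]
  exact symm2 hf (x, y, t) e1 e3

theorem pTpY (hf : Sm f) : pT (pY f) x y t = pY (pT f) x y t := by
  rw [pT_eq (SmY hf), pY_eq (SmT hf)]
  have hy : unc (pY f) = fun p => fderiv ℝ (unc f) p e2 := funext fun p => pY_eq hf
  have ht : unc (pT f) = fun p => fderiv ℝ (unc f) p e3 := funext fun p => pT_eq hf
  rw [hy, ht]
  exact symm2 hf (x, y, t) e2 e3

end Aux

namespace Aux

theorem Sm.cmul {f : ℝ → ℝ → ℝ → ℝ} (k : ℝ) (hf : Sm f) : Sm (fun x y t => k * f x y t) :=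
  contDiff_const.mul hf

theorem Sm.divc {f : ℝ → ℝ → ℝ → ℝ} (hf : Sm f) (k : ℝ) : Sm (fun x y t => f x y t / k) :=
  hf.div_const k

theorem Sm.pow {f : ℝ → ℝ → ℝ → ℝ} (hf : Sm f) (n : ℕ) : Sm (fun x y t => f x y t ^ n) :=
  ContDiff.pow hf n

theorem SmD {D : ℝ → ℝ → ℝ} (hD : ContDiff ℝ (⊤ : ℕ∞) fun p : ℝ × ℝ => D p.1 p.2) :
    Sm (fun x y _ => D x y) :=
  hD.comp (contDiff_fst.prodMk (contDiff_fst.comp contDiff_snd))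

end Aux

/-- smooth solutions of ∂ₜη + ∇·R = 0, ∂ₜu + ∇Q = 0 satisfy the
pointwise local conservation law ∂ₜ(½e) + ∇·F = 0 at every point of ℝ²×ℝ. -/
theorem abcd_local_conservation_law
    (g a b c : ℝ) (D : ℝ → ℝ → ℝ) (η u1 u2 : ℝ → ℝ → ℝ → ℝ)
    (hD : ContDiff ℝ (⊤ : ℕ∞) fun p : ℝ × ℝ => D p.1 p.2)
    (hη : ContDiff ℝ (⊤ : ℕ∞) fun p : ℝ × ℝ × ℝ => η p.1 p.2.1 p.2.2)
    (hu1 : ContDiff ℝ (⊤ : ℕ∞) fun p : ℝ × ℝ × ℝ => u1 p.1 p.2.1 p.2.2)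
    (hu2 : ContDiff ℝ (⊤ : ℕ∞) fun p : ℝ × ℝ × ℝ => u2 p.1 p.2.1 p.2.2)
    (hmass : ∀ x y t : ℝ,
      pT η x y t + pX (R1 a b D η u1 u2) x y t + pY (R2 a b D η u1 u2) x y t = 0)
    (hmom1 : ∀ x y t : ℝ, pT u1 x y t + pX (Qf g b c D η u1 u2) x y t = 0)
    (hmom2 : ∀ x y t : ℝ, pT u2 x y t + pY (Qf g b c D η u1 u2) x y t = 0) :
    ∀ x y t : ℝ,
      pT (fun x y t => (1/2) * eDen g a c D η u1 u2 x y t) x y t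
        + pX (F1 g a b c D η u1 u2) x y t
        + pY (F2 g a b c D η u1 u2) x y t = 0 := by
  intro x y t
  open Aux in
  -- smoothness facts
  have hsη : Sm η := hη
  have hsu1 : Sm u1 := hu1
  have hsu2 : Sm u2 := hu2
  have hDl : Sm (fun x y _ => D x y) := SmD hD
  have hsd2 : Sm (fun x y t : ℝ => (D x y) ^ 2) := by exact hDl.pow 2
  have hsd3 : Sm (fun x y t : ℝ => (D x y) ^ 3) := by exact hDl.pow 3
  have hsA : Sm (fun x y t => (D x y) ^ 3 * (pX u1 x y t + pY u2 x y t)) := by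
    exact hsd3.mul ((SmX hsu1).add (SmY hsu2))
  have hsQ : Sm (Qf g b c D η u1 u2) := by
    exact ((((Sm.cmul g hsη).add (((hsu1.pow 2).add (hsu2.pow 2)).divc 2)).add
      (Sm.cmul (c * g) ((SmX (hsd2.mul (SmX hsη))).add (SmY (hsd2.mul (SmY hsη)))))).sub
      (Sm.cmul b ((SmX (hsd2.mul (SmT hsu1))).add (SmY (hsd2.mul (SmT hsu2))))))
  have hsR1 : Sm (R1 a b D η u1 u2) := by
    exact (((hDl.add hsη).mul hsu1).add (Sm.cmul a (SmX hsA))).sub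
      ((Sm.cmul b hsd2).mul (SmX (SmT hsη)))
  have hsR2 : Sm (R2 a b D η u1 u2) := by
    exact (((hDl.add hsη).mul hsu2).add (Sm.cmul a (SmY hsA))).sub
      ((Sm.cmul b hsd2).mul (SmY (SmT hsη)))
  -- time derivative of the energy density
  have hT : pT (fun x y t => (1/2) * eDen g a c D η u1 u2 x y t) x y t
      = (1/2) * (((g * (2 * η x y t ^ 1 * pT η x y t)
          + ((0 + pT η x y t) * (u1 x y t ^ 2 + u2 x y t ^ 2)
            + (D x y + η x y t) * (2 * u1 x y t ^ 1 * pT u1 x y t + 2 * u2 x y t ^ 1 * pT u2 x y t)))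
          - c * g * (D x y) ^ 2 * (2 * pX η x y t ^ 1 * pT (pX η) x y t + 2 * pY η x y t ^ 1 * pT (pY η) x y t))
          - a * (D x y) ^ 3 * (2 * (pX u1 x y t + pY u2 x y t) ^ 1 * (pT (pX u1) x y t + pT (pY u2) x y t))) := by
    exact HasDerivAt.deriv (HasDerivAt.const_mul (1/2)
      (((((hasDT hsη x y t).pow 2).const_mul g).add
        (((hasDerivAt_const t (D x y)).add (hasDT hsη x y t)).mul
          (((hasDT hsu1 x y t).pow 2).add ((hasDT hsu2 x y t).pow 2)))).sub
        ((((hasDT (SmX hsη) x y t).pow 2).add ((hasDT (SmY hsη) x y t).pow 2)).const_mul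
          (c * g * (D x y) ^ 2)) |>.sub
        ((((hasDT (SmX hsu1) x y t).add (hasDT (SmY hsu2) x y t)).pow 2).const_mul
          (a * (D x y) ^ 3))))
  -- x derivative of F1
  have hX : pX (F1 g a b c D η u1 u2) x y t
      = (((pX (Qf g b c D η u1 u2) x y t * R1 a b D η u1 u2 x y t
            + Qf g b c D η u1 u2 x y t * pX (R1 a b D η u1 u2) x y t)
        + ((c * g * pX (pT η) x y t * (D x y) ^ 2
            + c * g * pT η x y t * pX (fun x y t : ℝ => (D x y) ^ 2) x y t) * pX η x y t
            + c * g * pT η x y t * (D x y) ^ 2 * pX (pX η) x y t))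
        + (a * pX (fun x y t => (D x y) ^ 3 * (pX u1 x y t + pY u2 x y t)) x y t * pT u1 x y t
            + a * ((D x y) ^ 3 * (pX u1 x y t + pY u2 x y t)) * pX (pT u1) x y t))
        - ((b * pX (pT η) x y t * (D x y) ^ 2
            + b * pT η x y t * pX (fun x y t : ℝ => (D x y) ^ 2) x y t) * pT u1 x y t
            + b * pT η x y t * (D x y) ^ 2 * pX (pT u1) x y t) := by
    exact HasDerivAt.deriv
      (((((hasDX hsQ x y t).mul (hasDX hsR1 x y t)).add
        ((((hasDX (SmT hsη) x y t).const_mul (c * g)).mul (hasDX hsd2 x y t)).mul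
          (hasDX (SmX hsη) x y t))).add
        (((hasDX hsA x y t).const_mul a).mul (hasDX (SmT hsu1) x y t))).sub
        ((((hasDX (SmT hsη) x y t).const_mul b).mul (hasDX hsd2 x y t)).mul
          (hasDX (SmT hsu1) x y t)))
  -- y derivative of F2
  have hY : pY (F2 g a b c D η u1 u2) x y t
      = (((pY (Qf g b c D η u1 u2) x y t * R2 a b D η u1 u2 x y t
            + Qf g b c D η u1 u2 x y t * pY (R2 a b D η u1 u2) x y t)
        + ((c * g * pY (pT η) x y t * (D x y) ^ 2
            + c * g * pT η x y t * pY (fun x y t : ℝ => (D x y) ^ 2) x y t) * pY η x y t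
            + c * g * pT η x y t * (D x y) ^ 2 * pY (pY η) x y t))
        + (a * pY (fun x y t => (D x y) ^ 3 * (pX u1 x y t + pY u2 x y t)) x y t * pT u2 x y t
            + a * ((D x y) ^ 3 * (pX u1 x y t + pY u2 x y t)) * pY (pT u2) x y t))
        - ((b * pY (pT η) x y t * (D x y) ^ 2
            + b * pT η x y t * pY (fun x y t : ℝ => (D x y) ^ 2) x y t) * pT u2 x y t
            + b * pT η x y t * (D x y) ^ 2 * pY (pT u2) x y t) := by
    exact HasDerivAt.deriv
      (((((hasDY hsQ x y t).mul (hasDY hsR2 x y t)).add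
        ((((hasDY (SmT hsη) x y t).const_mul (c * g)).mul (hasDY hsd2 x y t)).mul
          (hasDY (SmY hsη) x y t))).add
        (((hasDY hsA x y t).const_mul a).mul (hasDY (SmT hsu2) x y t))).sub
        ((((hasDY (SmT hsη) x y t).const_mul b).mul (hasDY hsd2 x y t)).mul
          (hasDY (SmT hsu2) x y t)))
  -- product expansions of the second-order terms inside Q
  have eP1 : pX (fun x y t => (D x y) ^ 2 * pX η x y t) x y t
      = pX (fun x y t : ℝ => (D x y) ^ 2) x y t * pX η x y t + (D x y) ^ 2 * pX (pX η) x y t :=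
    HasDerivAt.deriv ((hasDX hsd2 x y t).mul (hasDX (SmX hsη) x y t))
  have eP2 : pY (fun x y t => (D x y) ^ 2 * pY η x y t) x y t
      = pY (fun x y t : ℝ => (D x y) ^ 2) x y t * pY η x y t + (D x y) ^ 2 * pY (pY η) x y t :=
    HasDerivAt.deriv ((hasDY hsd2 x y t).mul (hasDY (SmY hsη) x y t))
  have eP3 : pX (fun x y t => (D x y) ^ 2 * pT u1 x y t) x y t
      = pX (fun x y t : ℝ => (D x y) ^ 2) x y t * pT u1 x y t + (D x y) ^ 2 * pX (pT u1) x y t :=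
    HasDerivAt.deriv ((hasDX hsd2 x y t).mul (hasDX (SmT hsu1) x y t))
  have eP4 : pY (fun x y t => (D x y) ^ 2 * pT u2 x y t) x y t
      = pY (fun x y t : ℝ => (D x y) ^ 2) x y t * pT u2 x y t + (D x y) ^ 2 * pY (pT u2) x y t :=
    HasDerivAt.deriv ((hasDY hsd2 x y t).mul (hasDY (SmT hsu2) x y t))
  -- Clairaut
  have c1 : pT (pX η) x y t = pX (pT η) x y t := pTpX hsη
  have c2 : pT (pY η) x y t = pY (pT η) x y t := pTpY hsη
  have c3 : pT (pX u1) x y t = pX (pT u1) x y t := pTpX hsu1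
  have c4 : pT (pY u2) x y t = pY (pT u2) x y t := pTpY hsu2
  -- PDE substitutions
  have hq1 : pX (Qf g b c D η u1 u2) x y t = -pT u1 x y t := by linarith [hmom1 x y t]
  have hq2 : pY (Qf g b c D η u1 u2) x y t = -pT u2 x y t := by linarith [hmom2 x y t]
  have hmR : pX (R1 a b D η u1 u2) x y t
      = -pT η x y t - pY (R2 a b D η u1 u2) x y t := by linarith [hmass x y t]
  -- value unfoldings
  have hQv : Qf g b c D η u1 u2 x y t
      = g * η x y t + (u1 x y t ^ 2 + u2 x y t ^ 2) / 2
        + c * g * (pX (fun x y t => (D x y) ^ 2 * pX η x y t) x y t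
                 + pY (fun x y t => (D x y) ^ 2 * pY η x y t) x y t)
        - b * (pX (fun x y t => (D x y) ^ 2 * pT u1 x y t) x y t
             + pY (fun x y t => (D x y) ^ 2 * pT u2 x y t) x y t) := rfl
  have hR1v : R1 a b D η u1 u2 x y t
      = (D x y + η x y t) * u1 x y t
        + a * pX (fun x y t => (D x y) ^ 3 * (pX u1 x y t + pY u2 x y t)) x y t
        - b * (D x y) ^ 2 * pX (pT η) x y t := rfl
  have hR2v : R2 a b D η u1 u2 x y t
      = (D x y + η x y t) * u2 x y t
        + a * pY (fun x y t => (D x y) ^ 3 * (pX u1 x y t + pY u2 x y t)) x y t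
        - b * (D x y) ^ 2 * pY (pT η) x y t := rfl
  rw [hT, hX, hY, hq1, hq2, hmR, hQv, hR1v, hR2v, eP1, eP2, eP3, eP4, c1, c2, c3, c4]
  ring
end
end

section
/- Let η, D : ℝ × ℝ → ℝ be smooth (arguments (x,t)) and let u, w : ℝ × ℝ × ℝ → ℝ be smooth (arguments (x,z,t)). Assume: (i) the incompressibility relation ∂_x u + ∂_z w = 0 holds at every (x,z,t); (ii) the kinematic free-surface condition ∂_t η(x,t) + u(x, η(x,t), t) ∂_x η(x,t) − w(x, η(x,t), t) = 0 holds for all (x,t); (iii) the kinematic bottom condition ∂_t D(x,t) + u(x, −D(x,t), t) ∂_x D(x,t) + w(x, −D(x,t), t) = 0 holds for all (x,t). Then for all (x,t) the exact depth-integrated mass conservation equation holds: ∂_t η(x,t) + ∂_t D(x,t) + ∂_x ( ∫_{−D(x,t)}^{η(x,t)} u(x,z,t) dz ) = 0. -/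
open intervalIntegral MeasureTheory Set Asymptotics Filter

private lemma one_le_top' : (1 : WithTop ℕ∞) ≤ ((⊤ : ℕ∞) : WithTop ℕ∞) := by
  exact_mod_cast (le_top : (1 : ℕ∞) ≤ ⊤)

/-- Leibniz rule: derivative of an interval integral with smooth integrand and
smooth moving endpoints. -/
private lemma leibniz_aux (f : ℝ → ℝ → ℝ) (a b : ℝ → ℝ)
    (hf : ContDiff ℝ (⊤ : ℕ∞) fun p : ℝ × ℝ => f p.1 p.2)
    (ha : ContDiff ℝ (⊤ : ℕ∞) a) (hb : ContDiff ℝ (⊤ : ℕ∞) b) (x : ℝ) :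
    HasDerivAt (fun s => ∫ z in a s..b s, f s z)
      (f x (b x) * deriv b x - f x (a x) * deriv a x
        + ∫ z in a x..b x, deriv (fun s => f s z) x) x := by
  set F : ℝ × ℝ → ℝ := fun p => f p.1 p.2 with hFdef
  have hFc : Continuous F := hf.continuous
  have hFd : Differentiable ℝ F := hf.differentiable (ENat.one_le_iff_ne_zero_withTop.mp one_le_top')
  set φ : ℝ → ℝ → ℝ := fun s z => fderiv ℝ F (s, z) (1, 0) with hφdef
  have hder : ∀ s z : ℝ, HasDerivAt (fun s' => f s' z) (φ s z) s := by
    intro s z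
    have h1 : HasFDerivAt F (fderiv ℝ F (s, z)) (s, z) := (hFd (s, z)).hasFDerivAt
    have h2 : HasDerivAt (fun s' : ℝ => (s', z)) ((1 : ℝ), (0 : ℝ)) s :=
      (hasDerivAt_id s).prodMk (hasDerivAt_const s z)
    exact h1.comp_hasDerivAt s h2
  have hφcont : Continuous fun p : ℝ × ℝ => φ p.1 p.2 := by
    have h := (hf.continuous_fderiv (ENat.one_le_iff_ne_zero_withTop.mp one_le_top')).clm_apply (continuous_const :
      Continuous fun _ : ℝ × ℝ => ((1 : ℝ), (0 : ℝ)))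
    simpa [hφdef] using h
  -- compact convex box
  set lo : ℝ := min (a x) (b x) - 1 with hlo
  set hi : ℝ := max (a x) (b x) + 1 with hhi
  set K : Set (ℝ × ℝ) := Icc (x - 1) (x + 1) ×ˢ Icc lo hi with hKdef
  have hK : IsCompact K := isCompact_Icc.prod isCompact_Icc
  have hKconv : Convex ℝ K := (convex_Icc _ _).prod (convex_Icc _ _)
  obtain ⟨M, hM⟩ := hK.exists_bound_of_continuousOn (hf.continuous_fderiv (ENat.one_le_iff_ne_zero_withTop.mp one_le_top')).continuousOn
  have hM0 : 0 ≤ M := by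
    have h1 : ((x, a x) : ℝ × ℝ) ∈ K := by
      refine ⟨⟨by linarith, by linarith⟩, ?_, ?_⟩
      · simp only [hlo]; have := min_le_left (a x) (b x); linarith
      · simp only [hhi]; have := le_max_left (a x) (b x); linarith
    exact le_trans (norm_nonneg _) (hM _ h1)
  have hnorm10 : ‖((1 : ℝ), (0 : ℝ))‖ = 1 := by simp [Prod.norm_def]
  have hφ_bound : ∀ s z : ℝ, (s, z) ∈ K → |φ s z| ≤ M := by
    intro s z hp
    have h1 : ‖fderiv ℝ F (s, z) (1, 0)‖ ≤ ‖fderiv ℝ F (s, z)‖ * ‖((1 : ℝ), (0 : ℝ))‖ :=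
      ContinuousLinearMap.le_opNorm _ _
    rw [hnorm10, mul_one] at h1
    exact le_trans h1 (hM _ hp)
  have hLip : ∀ s z : ℝ, (s, z) ∈ K → (x, z) ∈ K → |f s z - f x z| ≤ M * |s - x| := by
    intro s z hs hx
    have h2 := hKconv.norm_image_sub_le_of_norm_fderiv_le (fun p _ => hFd p) hM hx hs
    have hnorm : ‖((s, z) : ℝ × ℝ) - (x, z)‖ = |s - x| := by
      simp [Prod.norm_def]
    calc |f s z - f x z| = ‖F (s, z) - F (x, z)‖ := rfl
      _ ≤ M * ‖((s, z) : ℝ × ℝ) - (x, z)‖ := h2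
      _ = M * |s - x| := by rw [hnorm]
  have hxK : ∀ s : ℝ, |s - x| ≤ 1 → ∀ z ∈ Icc lo hi, (s, z) ∈ K := by
    intro s hs z hz
    have h := abs_le.mp hs
    exact ⟨⟨by linarith [h.1], by linarith [h.2]⟩, hz⟩
  have hzK : ∀ z ∈ Set.uIoc (a x) (b x), z ∈ Icc lo hi := by
    intro z hz
    rw [Set.mem_uIoc] at hz
    have h1 := min_le_left (a x) (b x); have h2 := min_le_right (a x) (b x)
    have h3 := le_max_left (a x) (b x); have h4 := le_max_right (a x) (b x)
    constructor
    · rcases hz with ⟨h, _⟩ | ⟨h, _⟩ <;> simp only [hlo] <;> linarith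
    · rcases hz with ⟨_, h⟩ | ⟨_, h⟩ <;> simp only [hhi] <;> linarith
  have hfxcont : Continuous fun z => f x z :=
    hFc.comp (continuous_const.prodMk continuous_id)
  have hfscont : ∀ s, Continuous fun z => f s z := fun s =>
    hFc.comp (continuous_const.prodMk continuous_id)
  have hgcont : ∀ s, Continuous fun z => f s z - f x z := fun s =>
    (hfscont s).sub hfxcont
  -- F₁ : moving endpoints, frozen integrand
  have h₁ : HasDerivAt (fun s => ∫ z in a s..b s, f x z)
      (f x (b x) * deriv b x - f x (a x) * deriv a x) x := by
    have hG := integral_hasFDerivAt (hfxcont.intervalIntegrable (a x) (b x))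
      (hfxcont.stronglyMeasurableAtFilter volume (nhds (a x)))
      (hfxcont.stronglyMeasurableAtFilter volume (nhds (b x)))
      hfxcont.continuousAt hfxcont.continuousAt
    have hab : HasDerivAt (fun s => (a s, b s)) (deriv a x, deriv b x) x :=
      ((ha.differentiable (ENat.one_le_iff_ne_zero_withTop.mp one_le_top') x).hasDerivAt).prodMk ((hb.differentiable (ENat.one_le_iff_ne_zero_withTop.mp one_le_top') x).hasDerivAt)
    have h3 := hG.comp_hasDerivAt x hab
    refine h3.congr_deriv ?_
    simp only [ContinuousLinearMap.coe_sub', Pi.sub_apply,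
      ContinuousLinearMap.smulRight_apply, ContinuousLinearMap.coe_snd',
      ContinuousLinearMap.coe_fst', smul_eq_mul]
    ring
  -- F₂ : fixed endpoints, varying integrand
  have h₂ : HasDerivAt (fun s => ∫ z in a x..b x, (f s z - f x z))
      (∫ z in a x..b x, φ x z) x := by
    refine (intervalIntegral.hasDerivAt_integral_of_dominated_loc_of_deriv_le
      (F := fun s z => f s z - f x z) (F' := φ) (bound := fun _ => M)
      (Metric.ball_mem_nhds x one_pos) (Eventually.of_forall fun s => (hgcont s).aestronglyMeasurable)
      ((hgcont x).intervalIntegrable _ _)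
      ((hφcont.comp (continuous_const.prodMk continuous_id)).aestronglyMeasurable)
      (ae_of_all _ ?_) intervalIntegrable_const (ae_of_all _ ?_)).2
    · intro z hz s hs
      have hs1 : |s - x| ≤ 1 := by
        have h := Metric.mem_ball.mp hs
        rw [Real.dist_eq] at h
        linarith
      exact hφ_bound s z (hxK s hs1 z (hzK z hz))
    · intro z _ s _
      exact (hder s z).sub_const (f x z)
  -- key estimate for the moving-endpoint corrections
  have key : ∀ c : ℝ → ℝ, ContDiff ℝ (⊤ : ℕ∞) c → lo ≤ c x - 1 → c x + 1 ≤ hi →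
      HasDerivAt (fun s => ∫ z in c x..c s, (f s z - f x z)) 0 x := by
    intro c hc hc1 hc2
    have hcd : HasDerivAt c (deriv c x) x := (hc.differentiable (ENat.one_le_iff_ne_zero_withTop.mp one_le_top') x).hasDerivAt
    rw [hasDerivAt_iff_isLittleO]
    simp only [integral_same, sub_zero, smul_zero]
    have hbO : (fun s => c s - c x) =O[nhds x] fun s => s - x := hcd.hasFDerivAt.isBigO_sub
    obtain ⟨C, hC⟩ := isBigO_iff.mp hbO
    have ev1 : ∀ᶠ s in nhds x, |s - x| ≤ 1 := by
      filter_upwards [Metric.closedBall_mem_nhds x one_pos] with s hs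
      simpa [Real.dist_eq] using hs
    have ev2 : ∀ᶠ s in nhds x, |c s - c x| ≤ 1 := by
      have htc : Filter.Tendsto c (nhds x) (nhds (c x)) := hcd.continuousAt
      filter_upwards [htc (Metric.closedBall_mem_nhds (c x) one_pos)] with s hs
      simpa [Real.dist_eq] using hs
    have big : (fun s => ∫ z in c x..c s, (f s z - f x z))
        =O[nhds x] fun s => (s - x) * (s - x) := by
      rw [isBigO_iff]
      refine ⟨M * C, ?_⟩
      filter_upwards [hC, ev1, ev2] with s h1 h2 h3
      have habs := abs_le.mp h3
      have hbd : ∀ z ∈ Set.uIoc (c x) (c s), ‖f s z - f x z‖ ≤ M * |s - x| := by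
        intro z hz
        rw [Set.mem_uIoc] at hz
        have hzicc : z ∈ Icc lo hi := by
          constructor
          · rcases hz with ⟨h, _⟩ | ⟨h, _⟩ <;> linarith [habs.1, habs.2]
          · rcases hz with ⟨_, h⟩ | ⟨_, h⟩ <;> linarith [habs.1, habs.2]
        exact hLip s z (hxK s h2 z hzicc) (hxK x (by simp) z hzicc)
      have h4 := intervalIntegral.norm_integral_le_of_norm_le_const hbd
      have h5 : |c s - c x| ≤ C * |s - x| := by
        simpa [Real.norm_eq_abs] using h1
      calc ‖∫ z in c x..c s, (f s z - f x z)‖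
          ≤ M * |s - x| * |c s - c x| := h4
        _ ≤ M * |s - x| * (C * |s - x|) :=
            mul_le_mul_of_nonneg_left h5 (mul_nonneg hM0 (abs_nonneg _))
        _ = M * C * ‖(s - x) * (s - x)‖ := by
            rw [Real.norm_eq_abs, abs_mul]; ring
    have little : (fun s : ℝ => (s - x) * (s - x)) =o[nhds x] fun s => s - x := by
      have h1 : (fun s : ℝ => s - x) =o[nhds x] (fun _ => (1 : ℝ)) := by
        rw [isLittleO_one_iff]
        have h : Filter.Tendsto (fun s : ℝ => s - x) (nhds x) (nhds (x - x)) :=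
          (continuous_id.sub continuous_const).tendsto x
        simpa using h
      have h2 := h1.mul_isBigO (isBigO_refl (fun s : ℝ => s - x) (nhds x))
      simpa using h2
    exact big.trans_isLittleO little
  have h₃ : HasDerivAt (fun s => ∫ z in b x..b s, (f s z - f x z)) 0 x := by
    refine key b hb ?_ ?_
    · simp only [hlo]; linarith [min_le_right (a x) (b x)]
    · simp only [hhi]; linarith [le_max_right (a x) (b x)]
  have h₄ : HasDerivAt (fun s => ∫ z in a s..a x, (f s z - f x z)) 0 x := by
    have h := (key a ha ?_ ?_).neg
    · have heq : (fun s => ∫ z in a s..a x, (f s z - f x z))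
          = fun s => -∫ z in a x..a s, (f s z - f x z) := by
        funext s; rw [integral_symm]
      rw [heq]; exact h.congr_deriv neg_zero
    · simp only [hlo]; linarith [min_le_left (a x) (b x)]
    · simp only [hhi]; linarith [le_max_left (a x) (b x)]
  have funeq : (fun s => ∫ z in a s..b s, f s z)
      = fun s => (((∫ z in a s..b s, f x z) + ∫ z in a x..b x, (f s z - f x z))
          + ∫ z in b x..b s, (f s z - f x z)) + ∫ z in a s..a x, (f s z - f x z) := by
    funext s
    have hg := hgcont s
    have A : ((∫ z in a s..a x, (f s z - f x z)) + ∫ z in a x..b x, (f s z - f x z))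
        = ∫ z in a s..b x, (f s z - f x z) :=
      integral_add_adjacent_intervals (hg.intervalIntegrable (a s) (a x))
        (hg.intervalIntegrable (a x) (b x))
    have B : ((∫ z in a s..b x, (f s z - f x z)) + ∫ z in b x..b s, (f s z - f x z))
        = ∫ z in a s..b s, (f s z - f x z) :=
      integral_add_adjacent_intervals (hg.intervalIntegrable (a s) (b x))
        (hg.intervalIntegrable (b x) (b s))
    have I1 : ∫ z in a s..b s, f s z
        = (∫ z in a s..b s, f x z) + ∫ z in a s..b s, (f s z - f x z) := by
      rw [← integral_add (hfxcont.intervalIntegrable _ _) (hg.intervalIntegrable _ _)]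
      exact integral_congr fun z _ => by ring
    rw [I1, ← B, ← A]; ring
  have hsum := ((h₁.add h₂).add h₃).add h₄
  rw [funeq]
  refine hsum.congr_deriv ?_
  rw [integral_congr (g := fun z => φ x z) fun z _ => (hder x z).deriv]
  ring

open intervalIntegral

/-- exact depth-integrated mass conservation in one horizontal
dimension. If ∂ₓu + ∂_z w = 0, together with the kinematic free-surface and
bottom conditions, then ∂_t η + ∂_t D + ∂ₓ ∫_{−D}^{η} u dz = 0. -/
theorem depth_integrated_mass_conservation
    (η D : ℝ → ℝ → ℝ) (u w : ℝ → ℝ → ℝ → ℝ)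
    (hη : ContDiff ℝ (⊤ : ℕ∞) fun p : ℝ × ℝ => η p.1 p.2)
    (hD : ContDiff ℝ (⊤ : ℕ∞) fun p : ℝ × ℝ => D p.1 p.2)
    (hu : ContDiff ℝ (⊤ : ℕ∞) fun p : ℝ × ℝ × ℝ => u p.1 p.2.1 p.2.2)
    (hw : ContDiff ℝ (⊤ : ℕ∞) fun p : ℝ × ℝ × ℝ => w p.1 p.2.1 p.2.2)
    (hincomp : ∀ x z t : ℝ,
      deriv (fun s => u s z t) x + deriv (fun s => w x s t) z = 0)
    (hsurf : ∀ x t : ℝ,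
      deriv (fun s => η x s) t
        + u x (η x t) t * deriv (fun s => η s t) x - w x (η x t) t = 0)
    (hbot : ∀ x t : ℝ,
      deriv (fun s => D x s) t
        + u x (-(D x t)) t * deriv (fun s => D s t) x + w x (-(D x t)) t = 0) :
    ∀ x t : ℝ,
      deriv (fun s => η x s) t + deriv (fun s => D x s) t
        + deriv (fun s => ∫ z in (-(D s t))..(η s t), u s z t) x = 0 := by
  intro x t
  have hcomp : ContDiff ℝ (⊤ : ℕ∞) fun p : ℝ × ℝ => u p.1 p.2 t :=
    hu.comp (contDiff_fst.prodMk (contDiff_snd.prodMk contDiff_const))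
  have hbC : ContDiff ℝ (⊤ : ℕ∞) fun s : ℝ => η s t :=
    hη.comp (contDiff_id.prodMk contDiff_const)
  have haC : ContDiff ℝ (⊤ : ℕ∞) fun s : ℝ => -(D s t) :=
    (hD.comp (contDiff_id.prodMk contDiff_const)).neg
  have hL := leibniz_aux (fun s z => u s z t) (fun s => -(D s t)) (fun s => η s t)
    hcomp haC hbC x
  rw [hL.deriv]
  have hneg : deriv (fun s => -(D s t)) x = -deriv (fun s => D s t) x := deriv.neg
  have hwC : ContDiff ℝ (⊤ : ℕ∞) fun z : ℝ => w x z t :=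
    hw.comp (contDiff_const.prodMk (contDiff_id.prodMk contDiff_const))
  have hI : (∫ z in (-(D x t))..(η x t), deriv (fun s => u s z t) x)
      = -(w x (η x t) t - w x (-(D x t)) t) := by
    have h1 : (∫ z in (-(D x t))..(η x t), deriv (fun s => u s z t) x)
        = ∫ z in (-(D x t))..(η x t), -deriv (fun z' => w x z' t) z :=
      integral_congr fun z _ => by have := hincomp x z t; linarith
    rw [h1, intervalIntegral.integral_neg, integral_deriv_eq_sub
      (fun z _ => (hwC.differentiable (ENat.one_le_iff_ne_zero_withTop.mp one_le_top')).differentiableAt)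
      ((hwC.continuous_deriv one_le_top').intervalIntegrable _ _)]
  rw [hneg, hI]
  have hs := hsurf x t
  have hb := hbot x t
  linarith
end

section
/- Let a, b, c, d ∈ ℝ satisfy a + b + c + d = 1/3 and (a + b)(b + c) + (a + b + c) d + d² = 2/15. Then the abcd dispersion ratio matches the Euler dispersion ratio to fourth order: the function x ↦ ((1 − a x²)(1 − c x²))/((1 + b x²)(1 + d x²)) − tanh(x)/x is O(x⁶) as x → 0 within ℝ \ {0}. -/
open Filter Topology Asymptotics

/-- If a + b + c + d = 1/3 and
(a+b)(b+c) + (a+b+c)d + d² = 2/15, then the abcd dispersion ratio matches the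
Euler dispersion ratio to fourth order:
((1 − a x²)(1 − c x²))/((1 + b x²)(1 + d x²)) − tanh(x)/x = O(x⁶)
as x → 0 within ℝ \ {0}. -/
theorem abcd_matches_euler_fourth_order (a b c d : ℝ)
    (h1 : a + b + c + d = 1/3)
    (h2 : (a + b) * (b + c) + (a + b + c) * d + d^2 = 2/15) :
    (fun x : ℝ =>
        ((1 - a * x^2) * (1 - c * x^2)) / ((1 + b * x^2) * (1 + d * x^2))
          - Real.tanh x / x)
      =O[𝓝[≠] (0:ℝ)] fun x : ℝ => x^6 := by
  set T : ℝ → ℝ := fun x => 1 + x + x^2/2 + x^3/6 + x^4/24 + x^5/120 + x^6/720 with hTdef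
  set N : ℝ → ℝ := fun x => (1 - a*x^2)*(1 - c*x^2) with hNdef
  set Q : ℝ → ℝ := fun x => (1 + b*x^2)*(1 + d*x^2) with hQdef
  set A : ℝ → ℝ := fun x => (x * N x - Q x)/2 with hAdef
  set B : ℝ → ℝ := fun x => (x * N x + Q x)/2 with hBdef
  set S : ℝ → ℝ := fun x =>
      (1/720 - (a+c)/24 + a*c/2 - (b+d)/120 - b*d/6)
      + (-(a+c)/720 + a*c/24 - b*d/120) * x^2 + (a*c/720) * x^4 with hSdef
  set R : ℝ → ℝ := fun x => Real.exp x - T x with hRdef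
  set g : ℝ → ℝ := fun x => A x * Real.exp x + B x * Real.exp (-x) with hgdef
  -- the key polynomial identity
  have polyKey : ∀ x : ℝ, A x * T x + B x * T (-x) = x^7 * S x := by
    intro x
    simp only [hAdef, hBdef, hNdef, hQdef, hTdef, hSdef]
    linear_combination (-x^3 - (1/2 + b + d) * x^5) * h1 + x^5 * h2
  -- Taylor sum of exp
  have hsum : ∀ x : ℝ, ∑ i ∈ Finset.range 7, x^i / (Nat.factorial i) = T x := by
    intro x
    simp [Finset.sum_range_succ, Nat.factorial, hTdef]
  -- remainder bound
  have hRbound : ∀ x : ℝ, |x| ≤ 1 → |R x| ≤ |x|^7 * (8 / (5040 * 7)) := by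
    intro x hx
    have h := Real.exp_bound hx (n := 7) (by norm_num)
    rw [hsum] at h
    have : (((7:ℕ).succ : ℝ) / ((Nat.factorial 7 : ℝ) * (7:ℕ))) = 8 / (5040 * 7) := by
      norm_num [Nat.factorial]
    rw [this] at h
    simpa [hRdef] using h
  have hsmall : ∀ᶠ x : ℝ in 𝓝 (0:ℝ), |x| ≤ 1 := by
    filter_upwards [Metric.closedBall_mem_nhds (0:ℝ) one_pos] with x hx
    simpa [Real.dist_eq] using hx
  have hRO : R =O[𝓝 (0:ℝ)] fun x => x^7 := by
    rw [Asymptotics.isBigO_iff]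
    refine ⟨8 / (5040 * 7), ?_⟩
    filter_upwards [hsmall] with x hx
    have h := hRbound x hx
    calc ‖R x‖ ≤ |x|^7 * (8 / (5040 * 7)) := h
    _ = 8 / (5040 * 7) * ‖x^7‖ := by rw [Real.norm_eq_abs, abs_pow]; ring
  have hRO' : (fun x => R (-x)) =O[𝓝 (0:ℝ)] fun x => x^7 := by
    rw [Asymptotics.isBigO_iff]
    refine ⟨8 / (5040 * 7), ?_⟩
    filter_upwards [hsmall] with x hx
    have h := hRbound (-x) (by simpa using hx)
    calc ‖R (-x)‖ ≤ |(-x)|^7 * (8 / (5040 * 7)) := h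
    _ = 8 / (5040 * 7) * ‖x^7‖ := by
        rw [Real.norm_eq_abs, abs_pow, abs_neg]; ring
  -- continuity facts
  have hNcont : Continuous N := by rw [hNdef]; fun_prop
  have hQcont : Continuous Q := by rw [hQdef]; fun_prop
  have hAcont : Continuous A := by
    rw [hAdef]; exact ((continuous_id.mul hNcont).sub hQcont).div_const 2
  have hBcont : Continuous B := by
    rw [hBdef]; exact ((continuous_id.mul hNcont).add hQcont).div_const 2
  have hScont : Continuous S := by rw [hSdef]; fun_prop
  have hAO : A =O[𝓝 (0:ℝ)] (fun _ => (1:ℝ)) := (hAcont.tendsto 0).isBigO_one ℝ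
  have hBO : B =O[𝓝 (0:ℝ)] (fun _ => (1:ℝ)) := (hBcont.tendsto 0).isBigO_one ℝ
  have hSO : S =O[𝓝 (0:ℝ)] (fun _ => (1:ℝ)) := (hScont.tendsto 0).isBigO_one ℝ
  -- g = O(x^7)
  have hgO : g =O[𝓝 (0:ℝ)] fun x => x^7 := by
    have hgeq : g = fun x => x^7 * S x + (A x * R x + B x * R (-x)) := by
      funext x
      have hx1 : Real.exp x = T x + R x := by rw [hRdef]; ring_nf
      have hx2 : Real.exp (-x) = T (-x) + R (-x) := by rw [hRdef]; ring_nf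
      rw [hgdef]
      show A x * Real.exp x + B x * Real.exp (-x)
          = x^7 * S x + (A x * R x + B x * R (-x))
      rw [hx1, hx2]
      linear_combination polyKey x
    rw [hgeq]
    have t1 : (fun x : ℝ => x^7 * S x) =O[𝓝 (0:ℝ)] fun x => x^7 := by
      have h := (Asymptotics.isBigO_refl (fun x : ℝ => x^7) (𝓝 (0:ℝ))).mul hSO
      simpa using h
    have t2 : (fun x : ℝ => A x * R x) =O[𝓝 (0:ℝ)] fun x => x^7 := by
      have h := hAO.mul hRO
      simpa using h
    have t3 : (fun x : ℝ => B x * R (-x)) =O[𝓝 (0:ℝ)] fun x => x^7 := by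
      have h := hBO.mul hRO'
      simpa using h
    exact t1.add (t2.add t3)
  -- denominator facts
  have hQ0 : Q 0 = 1 := by rw [hQdef]; norm_num
  have hQne : ∀ᶠ x : ℝ in 𝓝 (0:ℝ), Q x ≠ 0 :=
    hQcont.continuousAt.eventually_ne (by rw [hQ0]; norm_num)
  have hinv : Tendsto (fun x : ℝ => (Q x * Real.cosh x)⁻¹) (𝓝[≠] (0:ℝ)) (𝓝 1) := by
    have h : Tendsto (fun x : ℝ => (Q x * Real.cosh x)⁻¹) (𝓝 (0:ℝ))
        (𝓝 ((Q 0 * Real.cosh 0)⁻¹)) := by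
      apply Filter.Tendsto.inv₀
      · exact (hQcont.mul Real.continuous_cosh).tendsto 0
      · rw [hQ0]; simp
    have h' : Tendsto (fun x : ℝ => (Q x * Real.cosh x)⁻¹) (𝓝[≠] (0:ℝ))
        (𝓝 ((Q 0 * Real.cosh 0)⁻¹)) := h.mono_left nhdsWithin_le_nhds
    simpa [hQ0] using h'
  have hinvO : (fun x : ℝ => (Q x * Real.cosh x)⁻¹) =O[𝓝[≠] (0:ℝ)] (fun _ => (1:ℝ)) :=
    hinv.isBigO_one ℝ
  -- eventual equality of the target with g * inverse
  have hEq : (fun x : ℝ =>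
        ((1 - a * x^2) * (1 - c * x^2)) / ((1 + b * x^2) * (1 + d * x^2))
          - Real.tanh x / x)
      =ᶠ[𝓝[≠] (0:ℝ)]
      fun x => g x * (x⁻¹ * (Q x * Real.cosh x)⁻¹) := by
    filter_upwards [self_mem_nhdsWithin, hQne.filter_mono nhdsWithin_le_nhds]
      with x hx hQx
    have hx0 : x ≠ 0 := hx
    have hcosh : Real.cosh x ≠ 0 := (Real.cosh_pos x).ne'
    have hg' : g x = x * N x * Real.cosh x - Q x * Real.sinh x := by
      rw [hgdef]
      show A x * Real.exp x + B x * Real.exp (-x)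
          = x * N x * Real.cosh x - Q x * Real.sinh x
      rw [hAdef, hBdef]
      show (x * N x - Q x)/2 * Real.exp x + (x * N x + Q x)/2 * Real.exp (-x)
          = x * N x * Real.cosh x - Q x * Real.sinh x
      rw [Real.cosh_eq, Real.sinh_eq]
      ring
    show N x / Q x - Real.tanh x / x = g x * (x⁻¹ * (Q x * Real.cosh x)⁻¹)
    rw [Real.tanh_eq_sinh_div_cosh, hg']
    field_simp
  -- conclude
  have hbig : (fun x : ℝ => g x * (x⁻¹ * (Q x * Real.cosh x)⁻¹))
      =O[𝓝[≠] (0:ℝ)] fun x => x^6 := by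
    have h7 : g =O[𝓝[≠] (0:ℝ)] fun x => x^7 := hgO.mono nhdsWithin_le_nhds
    have hmul := h7.mul
      ((Asymptotics.isBigO_refl (fun x : ℝ => x⁻¹) (𝓝[≠] (0:ℝ))).mul hinvO)
    refine hmul.trans ?_
    rw [Asymptotics.isBigO_iff]
    refine ⟨1, ?_⟩
    filter_upwards [self_mem_nhdsWithin] with x hx
    have hx0 : x ≠ 0 := hx
    have he : x^7 * (x⁻¹ * 1) = x^6 := by
      field_simp
    rw [he, one_mul]
  exact hEq.trans_isBigO hbig
end

section
/- For the Nwogu coefficients a = −1/15, b = 0, c = 0, d = 2/5, the function x ↦ (1 + x²/15)/(1 + (2/5) x²) − tanh(x)/x is O(x⁶) as x → 0 within ℝ \ {0}; that is, the linearized Nwogu system matches the Euler dispersion relation up to and including the fourth-order term. -/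
open Filter Topology Asymptotics

private lemma exp_taylor7_bigO :
    (fun x : ℝ => Real.exp x - ∑ i ∈ Finset.range 7, x^i / i.factorial)
      =O[𝓝 (0:ℝ)] fun x : ℝ => x^7 := by
  rw [Asymptotics.isBigO_iff]
  refine ⟨(8:ℝ) / (5040 * 7), ?_⟩
  have h1 : ∀ᶠ x : ℝ in 𝓝 0, |x| ≤ 1 := by
    have : ∀ᶠ x : ℝ in 𝓝 0, x ∈ Metric.closedBall (0:ℝ) 1 :=
      Metric.closedBall_mem_nhds (0:ℝ) one_pos
    filter_upwards [this] with x hx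
    simpa [Real.dist_eq] using hx
  filter_upwards [h1] with x hx
  have := Real.exp_bound hx (n := 7) (by norm_num)
  calc ‖Real.exp x - ∑ i ∈ Finset.range 7, x^i / i.factorial‖
      = |Real.exp x - ∑ i ∈ Finset.range 7, x^i / i.factorial| := rfl
    _ ≤ |x|^7 * (8 / (Nat.factorial 7 * 7)) := by
        simpa using this
    _ = (8:ℝ) / (5040 * 7) * ‖x^7‖ := by
        rw [Real.norm_eq_abs, abs_pow]
        norm_num [Nat.factorial]
        ring

private lemma exp_neg_taylor7_bigO :
    (fun x : ℝ => Real.exp (-x) - ∑ i ∈ Finset.range 7, (-x)^i / i.factorial)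
      =O[𝓝 (0:ℝ)] fun x : ℝ => x^7 := by
  have hneg : Filter.Tendsto (fun x : ℝ => -x) (𝓝 0) (𝓝 0) := by
    simpa using (continuous_neg.tendsto (0:ℝ))
  have h := exp_taylor7_bigO.comp_tendsto hneg
  have h2 : (fun x : ℝ => (-x)^7) =O[𝓝 (0:ℝ)] fun x : ℝ => x^7 := by
    apply Asymptotics.isBigO_of_le
    intro x
    simp [abs_pow]
  exact h.trans h2

private lemma bigO_one_of_tendsto {l : Filter ℝ} {g : ℝ → ℝ} {c : ℝ}
    (h : Filter.Tendsto g l (𝓝 c)) : g =O[l] (fun _ => (1:ℝ)) :=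
  h.isBigO_one ℝ

private lemma N_bigO :
    (fun x : ℝ => (1 + x^2/15) * x * Real.cosh x - (1 + (2/5) * x^2) * Real.sinh x)
      =O[𝓝 (0:ℝ)] fun x : ℝ => x^7 := by
  have key : (fun x : ℝ => (1 + x^2/15) * x * Real.cosh x - (1 + (2/5) * x^2) * Real.sinh x)
      = fun x : ℝ =>
        ((1/1200 + x^2/10800) * x^7)
        + ((1/2) * (x + x^3/15 - 1 - (2/5)*x^2))
            * (Real.exp x - ∑ i ∈ Finset.range 7, x^i / i.factorial)
        + ((1/2) * (x + x^3/15 + 1 + (2/5)*x^2))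
            * (Real.exp (-x) - ∑ i ∈ Finset.range 7, (-x)^i / i.factorial) := by
    funext x
    rw [Real.cosh_eq, Real.sinh_eq]
    simp [Finset.sum_range_succ, Nat.factorial]
    ring
  rw [key]
  have h1 : (fun x : ℝ => (1/1200 + x^2/10800) * x^7) =O[𝓝 (0:ℝ)] fun x : ℝ => x^7 := by
    have hc : Filter.Tendsto (fun x : ℝ => 1/1200 + x^2/10800) (𝓝 0) (𝓝 (1/1200 + 0^2/10800)) := Continuous.tendsto (by fun_prop) 0
    simpa using (bigO_one_of_tendsto hc).mul (isBigO_refl (fun x : ℝ => x^7) _)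
  have h2 : (fun x : ℝ => ((1/2) * (x + x^3/15 - 1 - (2/5)*x^2))
      * (Real.exp x - ∑ i ∈ Finset.range 7, x^i / i.factorial)) =O[𝓝 (0:ℝ)] fun x : ℝ => x^7 := by
    have hc : Filter.Tendsto (fun x : ℝ => (1/2) * (x + x^3/15 - 1 - (2/5)*x^2)) (𝓝 0)
        (𝓝 ((1/2) * (0 + 0^3/15 - 1 - (2/5)*0^2))) := Continuous.tendsto (by fun_prop) 0
    simpa using (bigO_one_of_tendsto hc).mul exp_taylor7_bigO
  have h3 : (fun x : ℝ => ((1/2) * (x + x^3/15 + 1 + (2/5)*x^2))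
      * (Real.exp (-x) - ∑ i ∈ Finset.range 7, (-x)^i / i.factorial)) =O[𝓝 (0:ℝ)] fun x : ℝ => x^7 := by
    have hc : Filter.Tendsto (fun x : ℝ => (1/2) * (x + x^3/15 + 1 + (2/5)*x^2)) (𝓝 0)
        (𝓝 ((1/2) * (0 + 0^3/15 + 1 + (2/5)*0^2))) := Continuous.tendsto (by fun_prop) 0
    simpa using (bigO_one_of_tendsto hc).mul exp_neg_taylor7_bigO
  exact (h1.add h2).add h3

/-- For the Nwogu coefficients a = −1/15, b = 0, c = 0, d = 2/5,
(1 + x²/15)/(1 + (2/5)x²) − tanh(x)/x = O(x⁶) as x → 0 within ℝ \ {0}. -/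
theorem nwogu_matches_euler_fourth_order :
    (fun x : ℝ => (1 + x^2/15) / (1 + (2/5) * x^2) - Real.tanh x / x)
      =O[𝓝[≠] (0:ℝ)] fun x : ℝ => x^6 := by
  have hN : (fun x : ℝ => (1 + x^2/15) * x * Real.cosh x - (1 + (2/5) * x^2) * Real.sinh x)
      =O[𝓝[≠] (0:ℝ)] fun x : ℝ => x^7 := N_bigO.mono nhdsWithin_le_nhds
  have hg : (fun x : ℝ => ((1 + (2/5) * x^2) * Real.cosh x)⁻¹)
      =O[𝓝[≠] (0:ℝ)] (fun _ => (1:ℝ)) := by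
    have hc : Filter.Tendsto (fun x : ℝ => ((1 + (2/5) * x^2) * Real.cosh x)⁻¹) (𝓝 0)
        (𝓝 (((1 + (2/5) * 0^2) * Real.cosh 0)⁻¹)) := by
      apply Filter.Tendsto.inv₀
      · exact Continuous.tendsto (by fun_prop) 0
      · simp [Real.cosh_zero]
    exact bigO_one_of_tendsto (hc.mono_left nhdsWithin_le_nhds)
  have hM : (fun x : ℝ => ((1 + x^2/15) * x * Real.cosh x - (1 + (2/5) * x^2) * Real.sinh x)
      * ((1 + (2/5) * x^2) * Real.cosh x)⁻¹ * x⁻¹)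
      =O[𝓝[≠] (0:ℝ)] fun x : ℝ => x^7 * 1 * x⁻¹ :=
    (hN.mul hg).mul (isBigO_refl (fun x : ℝ => x⁻¹) _)
  have heq1 : (fun x : ℝ => (1 + x^2/15) / (1 + (2/5) * x^2) - Real.tanh x / x)
      =ᶠ[𝓝[≠] (0:ℝ)] fun x : ℝ => ((1 + x^2/15) * x * Real.cosh x
        - (1 + (2/5) * x^2) * Real.sinh x) * ((1 + (2/5) * x^2) * Real.cosh x)⁻¹ * x⁻¹ := by
    filter_upwards [self_mem_nhdsWithin] with x hx
    have hx0 : x ≠ 0 := hx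
    have hcosh : Real.cosh x ≠ 0 := (Real.cosh_pos x).ne'
    have hden : (1 + (2/5) * x^2) ≠ 0 := by positivity
    rw [Real.tanh_eq_sinh_div_cosh]
    field_simp
  have heq2 : (fun x : ℝ => x^7 * 1 * x⁻¹) =ᶠ[𝓝[≠] (0:ℝ)] fun x : ℝ => x^6 := by
    filter_upwards [self_mem_nhdsWithin] with x hx
    have hx0 : x ≠ 0 := hx
    field_simp
  exact (hM.congr' heq1.symm heq2)
end

section
/- Let θ ∈ [0,1] and μ, ν ∈ ℝ, and set a = ½(θ² − 1/3)μ, b = ½(θ² − 1/3)(1 − μ), c = ½(1 − θ²)ν, d = ½(1 − θ²)(1 − ν). Then the function x ↦ ((1 − a x²)(1 − c x²))/((1 + b x²)(1 + d x²)) − tanh(x)/x is O(x⁴) as x → 0 within ℝ \ {0}; that is, for every admissible choice of θ, μ, ν the linearized dispersion relation of the new abcd-Boussinesq system agrees with that of the Euler equations up to and including the second-order term, so all systems of the family are asymptotically equivalent at this order. -/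
open Filter Topology Asymptotics

/-- Taylor bound for `sinh` at `0`. -/
lemma sinh_taylor_bound (x : ℝ) (hx : |x| ≤ 1) :
    |Real.sinh x - (x + x^3/6)| ≤ |x|^5 / 100 := by
  have hx' : |(-x)| ≤ 1 := by rwa [abs_neg]
  have h1 := Real.exp_bound hx (n := 5) (by norm_num)
  have h2 := Real.exp_bound hx' (n := 5) (by norm_num)
  simp only [Finset.sum_range_succ, Finset.sum_range_zero, Nat.factorial] at h1 h2
  norm_num at h1 h2
  rw [Real.sinh_eq]
  set u := Real.exp x - (1 + x + x ^ 2 / 2 + x ^ 3 / 6 + x ^ 4 / 24) with hu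
  set v := Real.exp (-x) - (1 + -x + x ^ 2 / 2 + (-x) ^ 3 / 6 + (-x) ^ 4 / 24) with hv
  have e : (Real.exp x - Real.exp (-x))/2 - (x + x^3/6) = (u - v)/2 := by
    rw [hu, hv]; ring
  rw [e]
  have h3 : |u - v| ≤ |u| + |v| := abs_sub u v
  calc |(u - v)/2| = |u - v|/2 := by rw [abs_div, abs_two]
  _ ≤ (|u| + |v|)/2 := by linarith
  _ ≤ |x|^5/100 := by rw [hv, show ((-x)^4 : ℝ) = x^4 by ring]; linarith

/-- Taylor bound for `cosh` at `0`. -/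
lemma cosh_taylor_bound (x : ℝ) (hx : |x| ≤ 1) :
    |Real.cosh x - (1 + x^2/2)| ≤ |x|^4 * (5/96) := by
  have hx' : |(-x)| ≤ 1 := by rwa [abs_neg]
  have h1 := Real.exp_bound hx (n := 4) (by norm_num)
  have h2 := Real.exp_bound hx' (n := 4) (by norm_num)
  simp only [Finset.sum_range_succ, Finset.sum_range_zero, Nat.factorial] at h1 h2
  norm_num at h1 h2
  rw [Real.cosh_eq]
  set u := Real.exp x - (1 + x + x ^ 2 / 2 + x ^ 3 / 6) with hu
  set v := Real.exp (-x) - (1 + -x + x ^ 2 / 2 + (-x) ^ 3 / 6) with hv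
  have e : (Real.exp x + Real.exp (-x))/2 - (1 + x^2/2) = (u + v)/2 := by
    rw [hu, hv]; ring
  rw [e]
  have h3 : |u + v| ≤ |u| + |v| := abs_add_le u v
  calc |(u + v)/2| = |u + v|/2 := by rw [abs_div, abs_two]
  _ ≤ (|u| + |v|)/2 := by linarith
  _ ≤ |x|^4 * (5/96) := by linarith

/-- Taylor bound for `tanh` at `0`. -/
lemma tanh_taylor_bound (x : ℝ) (hx : |x| ≤ 1) :
    |Real.tanh x - (x - x^3/3)| ≤ |x|^5 := by
  have hs := sinh_taylor_bound x hx
  have hc := cosh_taylor_bound x hx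
  have hc1 : (1:ℝ) ≤ Real.cosh x := Real.one_le_cosh x
  have hc0 : Real.cosh x ≠ 0 := by positivity
  rw [Real.tanh_eq_sinh_div_cosh]
  set s := Real.sinh x
  set c := Real.cosh x
  have key : |s - (x - x^3/3) * c| ≤ |x|^5 := by
    have e : s - (x - x^3/3) * c
        = (s - (x + x^3/6)) - (x - x^3/3) * (c - (1 + x^2/2)) + x^5/6 := by ring
    have hb : |(x - x^3/3) * (c - (1 + x^2/2))| ≤ (4/3 * |x|) * (|x|^4 * (5/96)) := by
      rw [abs_mul]
      apply mul_le_mul _ hc _ (by positivity)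
      · calc |x - x^3/3| ≤ |x| + |x^3/3| := abs_sub x (x^3/3)
          _ = |x| + |x|^3/3 := by rw [abs_div, abs_pow]; norm_num
          _ ≤ |x| + |x|/3 := by
              have : |x|^3 ≤ |x| := by
                simpa using pow_le_pow_of_le_one (abs_nonneg x) hx (by norm_num : 1 ≤ 3)
              linarith
          _ = 4/3 * |x| := by ring
      · positivity
    have hx5 : |x^5/6| = |x|^5/6 := by rw [abs_div, abs_pow]; norm_num
    have h4 : |s - (x - x^3/3) * c| ≤ |s - (x + x^3/6)|
        + |(x - x^3/3) * (c - (1 + x^2/2))| + |x^5/6| := by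
      rw [e]
      calc _ ≤ |(s - (x + x^3/6)) - (x - x^3/3) * (c - (1 + x^2/2))| + |x^5/6| :=
            abs_add_le _ _
        _ ≤ _ := by
            have := abs_sub (s - (x + x^3/6)) ((x - x^3/3) * (c - (1 + x^2/2))); linarith
    have hxx : 4/3 * |x| * (|x|^4 * (5/96)) = |x|^5 * (5/72) := by ring
    nlinarith [abs_nonneg x, pow_nonneg (abs_nonneg x) 5]
  have e2 : s / c - (x - x^3/3) = (s - (x - x^3/3) * c) / c := by field_simp
  rw [e2, abs_div, abs_of_pos (by positivity : (0:ℝ) < c)]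
  calc |s - (x - x^3/3) * c| / c ≤ |s - (x - x^3/3) * c| / 1 := by
        apply div_le_div_of_nonneg_left (abs_nonneg _) one_pos hc1
  _ = |s - (x - x^3/3) * c| := by rw [div_one]
  _ ≤ |x|^5 := key

/-- For θ ∈ [0,1] and μ, ν ∈ ℝ, with
a = ½(θ² − 1/3)μ, b = ½(θ² − 1/3)(1 − μ), c = ½(1 − θ²)ν, d = ½(1 − θ²)(1 − ν),
((1 − a x²)(1 − c x²))/((1 + b x²)(1 + d x²)) − tanh(x)/x = O(x⁴)
as x → 0 within ℝ \ {0}. -/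
theorem new_abcd_second_order_equivalence (θ μ ν a b c d : ℝ)
    (hθ : θ ∈ Set.Icc (0:ℝ) 1)
    (ha : a = (1/2) * (θ^2 - 1/3) * μ)
    (hb : b = (1/2) * (θ^2 - 1/3) * (1 - μ))
    (hc : c = (1/2) * (1 - θ^2) * ν)
    (hd : d = (1/2) * (1 - θ^2) * (1 - ν)) :
    (fun x : ℝ =>
        ((1 - a * x^2) * (1 - c * x^2)) / ((1 + b * x^2) * (1 + d * x^2))
          - Real.tanh x / x)
      =O[𝓝[≠] (0:ℝ)] fun x : ℝ => x^4 := by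
  have hsum : a + b + c + d = 1/3 := by rw [ha, hb, hc, hd]; ring
  -- Part A : the rational part agrees with 1 - x²/3 up to O(x⁴)
  have hA : (fun x : ℝ => ((1 - a * x^2) * (1 - c * x^2)) / ((1 + b * x^2) * (1 + d * x^2))
      - (1 - x^2/3)) =O[𝓝 (0:ℝ)] fun x : ℝ => x^4 := by
    set g : ℝ → ℝ := fun x => (a*c - b*d + (b+d)/3 + b*d*x^2/3) / ((1 + b*x^2) * (1 + d*x^2))
      with hg
    have hcont1 : ContinuousAt (fun x : ℝ => 1 + b*x^2) 0 := by fun_prop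
    have hcont2 : ContinuousAt (fun x : ℝ => 1 + d*x^2) 0 := by fun_prop
    have hev1 : ∀ᶠ x : ℝ in 𝓝 0, 1 + b*x^2 ≠ 0 := by
      have := hcont1.eventually_ne (by norm_num : (1:ℝ) + b*0^2 ≠ 0)
      simpa using this
    have hev2 : ∀ᶠ x : ℝ in 𝓝 0, 1 + d*x^2 ≠ 0 := by
      have := hcont2.eventually_ne (by norm_num : (1:ℝ) + d*0^2 ≠ 0)
      simpa using this
    have heq : (fun x : ℝ => ((1 - a * x^2) * (1 - c * x^2)) / ((1 + b * x^2) * (1 + d * x^2))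
        - (1 - x^2/3)) =ᶠ[𝓝 0] fun x => x^4 * g x := by
      filter_upwards [hev1, hev2] with x h1 h2
      have h12 := mul_ne_zero h1 h2
      rw [hg]
      beta_reduce
      rw [sub_eq_iff_eq_add, mul_div_assoc', div_add' _ _ _ h12, div_left_inj' h12]
      linear_combination (-x^2) * hsum
    have hgO : g =O[𝓝 (0:ℝ)] (fun _ => (1:ℝ)) := by
      have hgc : ContinuousAt g 0 := by
        apply ContinuousAt.div (by fun_prop) (by fun_prop)
        norm_num
      exact hgc.tendsto.isBigO_one ℝ
    calc (fun x : ℝ => ((1 - a * x^2) * (1 - c * x^2)) / ((1 + b * x^2) * (1 + d * x^2))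
        - (1 - x^2/3)) =O[𝓝 0] fun x => x^4 * g x := heq.isBigO
    _ =O[𝓝 0] fun x : ℝ => x^4 * 1 := (isBigO_refl (fun x : ℝ => x^4) _).mul hgO
    _ = fun x : ℝ => x^4 := by funext x; ring
  -- Part B : tanh x / x agrees with 1 - x²/3 up to O(x⁴)
  have hB : (fun x : ℝ => (1 - x^2/3) - Real.tanh x / x) =O[𝓝[≠] (0:ℝ)]
      fun x : ℝ => x^4 := by
    rw [isBigO_iff]
    refine ⟨1, ?_⟩
    have h1 : ∀ᶠ x : ℝ in 𝓝[≠] 0, x ≠ 0 := eventually_mem_nhdsWithin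
    have h2 : ∀ᶠ x : ℝ in 𝓝[≠] 0, |x| ≤ 1 := by
      have h : ∀ᶠ x : ℝ in 𝓝 (0:ℝ), |x| ≤ 1 := by
        filter_upwards [Metric.ball_mem_nhds (0:ℝ) one_pos] with x hx
        rw [Metric.mem_ball, Real.dist_eq, sub_zero] at hx
        exact hx.le
      exact h.filter_mono nhdsWithin_le_nhds
    filter_upwards [h1, h2] with x hx0 hx1
    have ht := tanh_taylor_bound x hx1
    have e : (1 - x^2/3) - Real.tanh x / x = -((Real.tanh x - (x - x^3/3))/x) := by
      field_simp; ring
    rw [e, Real.norm_eq_abs, Real.norm_eq_abs, abs_neg, abs_div, one_mul]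
    have hxpos : 0 < |x| := abs_pos.mpr hx0
    rw [div_le_iff₀ hxpos, abs_pow]
    calc |Real.tanh x - (x - x^3/3)| ≤ |x|^5 := ht
    _ = |x|^4 * |x| := by ring
  -- combine
  have hsplit : (fun x : ℝ =>
      ((1 - a * x^2) * (1 - c * x^2)) / ((1 + b * x^2) * (1 + d * x^2))
        - Real.tanh x / x)
      = fun x : ℝ => (((1 - a * x^2) * (1 - c * x^2)) / ((1 + b * x^2) * (1 + d * x^2))
        - (1 - x^2/3)) + ((1 - x^2/3) - Real.tanh x / x) := by
    funext x; ring
  rw [hsplit]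
  exact (hA.mono nhdsWithin_le_nhds).add hB
end
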